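/- arXiv:2403.06983 — 5 statements merged into one kernel-verified Lean document; each statement's English description precedes it below -/
import Mathlib

section
/- Let D = diag(λ₁,…,λ_d) with λ₁ > … > λ_d > 0, let v ∈ ℝ^d have only nonzero entries, set V = max(d^{-1/2}, ‖v‖_∞), let A = D + √D v vᵀ √D with eigenvalues ν₁ ≥ … ≥ ν_d. For i ∈ {1,…,d}, let j_i ∈ {i,…,d} be any index maximizing |[v]_j| over the set of j ∈ {i,…,d} satisfying λ_j ≥ λ_i · (1 − √(λ_j/λ_i)(d−i+1)‖v‖_∞|[v]_j|). Then 0 < ν_i − λ_{j_i} ≤ 2 λ_i (d−i+1) V |[v]_{j_i}|. -/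
open Matrix Finset

noncomputable def supNorm {d : ℕ} (hd : 0 < d) (v : Fin d → ℝ) : ℝ :=
  Finset.univ.sup' (Finset.univ_nonempty_iff.mpr (Fin.pos_iff_nonempty.mp hd))
    fun j => |v j|

/-- `0 < νᵢ − λ_{jᵢ} ≤ 2 λᵢ (d−i+1) V |[v]_{jᵢ}|` for the index `jᵢ` of Lemma 1.
Indices are 0-based, so the count `d − i + 1` of the paper (1-based `i`) becomes
`d − i`. -/
theorem eigenvalue_gap_bound
    {d : ℕ} (hd : 0 < d)
    (lam : Fin d → ℝ) (hlam_strict : StrictAnti lam) (hlam_pos : ∀ i, 0 < lam i)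
    (v : Fin d → ℝ) (hv : ∀ j, v j ≠ 0)
    (V : ℝ) (hV : V = max (1 / Real.sqrt d) (supNorm hd v))
    (A : Matrix (Fin d) (Fin d) ℝ)
    (hA : A = Matrix.diagonal lam +
      (Matrix.diagonal fun i => Real.sqrt (lam i)) * Matrix.vecMulVec v v *
      (Matrix.diagonal fun i => Real.sqrt (lam i)))
    (ν : Fin d → ℝ) (hν_anti : Antitone ν)
    (e : Fin d → Fin d → ℝ)
    (he_orth : ∀ i j, e i ⬝ᵥ e j = if i = j then (1 : ℝ) else 0)
    (he_eig : ∀ i, A.mulVec (e i) = ν i • e i)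
    (ji : Fin d → Fin d)
    (hji_ge : ∀ i, i ≤ ji i)
    (hji_mem : ∀ i : Fin d, lam (ji i) ≥ lam i *
      (1 - Real.sqrt (lam (ji i) / lam i) * ((d : ℝ) - (i : ℕ)) * supNorm hd v *
        |v (ji i)|))
    (hji_max : ∀ i j : Fin d, i ≤ j →
      lam j ≥ lam i *
        (1 - Real.sqrt (lam j / lam i) * ((d : ℝ) - (i : ℕ)) * supNorm hd v * |v j|) →
      |v j| ≤ |v (ji i)|) :
    ∀ i : Fin d,
      0 < ν i - lam (ji i) ∧
      ν i - lam (ji i) ≤ 2 * lam i * ((d : ℝ) - (i : ℕ)) * V * |v (ji i)| := by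
  classical
  haveI hne_inst : Nonempty (Fin d) := Fin.pos_iff_nonempty.mp hd
  set w : Fin d → ℝ := fun j => Real.sqrt (lam j) * v j with hwdef
  have hlam_nn : ∀ j, (0:ℝ) ≤ lam j := fun j => (hlam_pos j).le
  have hsqrt_pos : ∀ j, 0 < Real.sqrt (lam j) := fun j => Real.sqrt_pos.mpr (hlam_pos j)
  have hw2 : ∀ j, w j * w j = lam j * (v j * v j) := by
    intro j
    simp only [hwdef]
    rw [mul_mul_mul_comm, Real.mul_self_sqrt (hlam_nn j)]
  have hwne : ∀ j, w j ≠ 0 := fun j => mul_ne_zero (hsqrt_pos j).ne' (hv j)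
  have hw2pos : ∀ j, 0 < w j * w j := fun j => mul_self_pos.mpr (hwne j)
  -- mulVec formula
  have hmul : ∀ x : Fin d → ℝ, ∀ j, A.mulVec x j
      = lam j * x j + w j * (∑ k, w k * x k) := by
    intro x j
    have hAjk : ∀ k, A j k = (if j = k then lam j else 0) + w j * w k := by
      intro k
      rw [hA]
      simp [Matrix.add_apply, Matrix.diagonal_apply, Matrix.mul_diagonal,
        Matrix.diagonal_mul, Matrix.vecMulVec_apply, hwdef]
      ring
    simp only [Matrix.mulVec, dotProduct, hAjk, add_mul]
    rw [Finset.sum_add_distrib]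
    congr 1
    · simp [ite_mul]
    · rw [Finset.mul_sum]
      exact Finset.sum_congr rfl fun k _ => by ring
  -- coordinatewise eigen-equation
  have hcoord : ∀ (i : Fin d) (j : Fin d),
      (ν i - lam j) * e i j = w j * (∑ k, w k * e i k) := by
    intro i j
    have h := congrFun (he_eig i) j
    rw [hmul (e i) j] at h
    simp only [Pi.smul_apply, smul_eq_mul] at h
    linear_combination -h
  have he_norm : ∀ i, (∑ j, e i j * e i j) = 1 := by
    intro i
    have h := he_orth i i
    simpa [dotProduct] using h
  -- ν i is never a lam k
  have hν_ne : ∀ i k, ν i ≠ lam k := by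
    intro i k hik
    have hS : w k * (∑ m, w m * e i m) = 0 := by
      have h := hcoord i k
      rw [hik, sub_self, zero_mul] at h
      exact h.symm
    have hS0 : (∑ m, w m * e i m) = 0 := by
      rcases mul_eq_zero.mp hS with h | h
      · exact absurd h (hwne k)
      · exact h
    have hz : ∀ j, j ≠ k → e i j = 0 := by
      intro j hjk
      have h := hcoord i j
      rw [hS0, mul_zero] at h
      rcases mul_eq_zero.mp h with h' | h'
      · exfalso
        exact hjk (hlam_strict.injective (by linarith : lam j = lam k))
      · exact h'
    have hSk : w k * e i k = 0 := by
      rw [← hS0]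
      rw [Finset.sum_eq_single k (fun m _ hm => by rw [hz m hm, mul_zero]) (by simp)]
    have hek : e i k = 0 := by
      rcases mul_eq_zero.mp hSk with h | h
      · exact absurd h (hwne k)
      · exact h
    have hone : (1:ℝ) = 0 := by
      rw [← he_norm i]
      apply Finset.sum_eq_zero
      intro j _
      by_cases hj : j = k
      · rw [hj, hek, mul_zero]
      · rw [hz j hj, zero_mul]
    norm_num at hone
  -- S i ≠ 0
  have hSne : ∀ i, (∑ m, w m * e i m) ≠ 0 := by
    intro i hS0
    have hz : ∀ j, e i j = 0 := by
      intro j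
      have h := hcoord i j
      rw [hS0, mul_zero] at h
      rcases mul_eq_zero.mp h with h' | h'
      · exact absurd (by linarith : ν i = lam j) (hν_ne i j)
      · exact h'
    have hone : (1:ℝ) = 0 := by
      rw [← he_norm i]
      exact Finset.sum_eq_zero fun j _ => by rw [hz j, zero_mul]
    norm_num at hone
  have hνlam_ne : ∀ i j, ν i - lam j ≠ 0 := fun i j => sub_ne_zero.mpr (hν_ne i j)
  have hcoord' : ∀ i j, e i j = w j * (∑ m, w m * e i m) / (ν i - lam j) := by
    intro i j
    rw [eq_div_iff (hνlam_ne i j)]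
    linear_combination hcoord i j
  -- secular equation
  have hsec : ∀ i, (∑ j, w j * w j / (ν i - lam j)) = 1 := by
    intro i
    have hS : (∑ m, w m * e i m)
        = (∑ j, w j * w j / (ν i - lam j)) * (∑ m, w m * e i m) := by
      conv_lhs => rw [show (∑ m, w m * e i m) = ∑ m, w m * e i m from rfl]
      rw [Finset.sum_mul]
      apply Finset.sum_congr rfl
      intro j _
      rw [hcoord' i j]
      ring
    have := hSne i
    have h2 : ((∑ j, w j * w j / (ν i - lam j)) - 1) * (∑ m, w m * e i m) = 0 := by
      linear_combination -hS
    rcases mul_eq_zero.mp h2 with h | h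
    · linarith [sub_eq_zero.mp h]
    · exact absurd h this
  -- injectivity of ν
  have hν_inj : Function.Injective ν := by
    intro i k hik
    by_contra hne
    have hdot : (∑ j, e i j * e k j) = 0 := by
      have h := he_orth i k
      simp only [dotProduct] at h
      rw [h, if_neg hne]
    have hterm : ∀ j, e i j * e k j
        = w j * w j / ((ν i - lam j) * (ν i - lam j))
          * ((∑ m, w m * e i m) * (∑ m, w m * e k m)) := by
      intro j
      rw [hcoord' i j, hcoord' k j, ← hik]
      field_simp
    have hsum : (∑ j, e i j * e k j)
        = (∑ j, w j * w j / ((ν i - lam j) * (ν i - lam j)))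
          * ((∑ m, w m * e i m) * (∑ m, w m * e k m)) := by
      rw [Finset.sum_mul]
      exact Finset.sum_congr rfl fun j _ => hterm j
    have hpos : 0 < ∑ j, w j * w j / ((ν i - lam j) * (ν i - lam j)) := by
      apply Finset.sum_pos _ Finset.univ_nonempty
      intro j _
      exact div_pos (hw2pos j) (mul_self_pos.mpr (hνlam_ne i j))
    have : (∑ j, e i j * e k j) ≠ 0 := by
      rw [hsum]
      exact mul_ne_zero hpos.ne' (mul_ne_zero (hSne i) (hSne k))
    exact this hdot
  have hν_sa : StrictAnti ν := hν_anti.strictAnti_of_injective hν_inj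
  -- Rayleigh lower bound: ν i > lam L where L is the last index
  set L : Fin d := ⟨d - 1, by omega⟩ with hLdef
  have hlamL : ∀ j, lam L ≤ lam j := by
    intro j
    apply hlam_strict.antitone
    rw [Fin.le_def]
    simp only [hLdef]
    omega
  have hray : ∀ i, lam L < ν i := by
    intro i
    have h1 : e i ⬝ᵥ (ν i • e i) = ν i := by
      simp only [dotProduct, Pi.smul_apply, smul_eq_mul]
      rw [show (∑ j, e i j * (ν i * e i j)) = ν i * ∑ j, e i j * e i j by
        rw [Finset.mul_sum]; exact Finset.sum_congr rfl fun j _ => by ring]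
      rw [he_norm i, mul_one]
    have h2 : e i ⬝ᵥ (A.mulVec (e i))
        = (∑ j, lam j * (e i j * e i j))
          + (∑ m, w m * e i m) * (∑ m, w m * e i m) := by
      simp only [dotProduct]
      rw [show (∑ j, e i j * A.mulVec (e i) j)
          = ∑ j, (lam j * (e i j * e i j) + (w j * e i j) * (∑ k, w k * e i k)) by
        exact Finset.sum_congr rfl fun j _ => by rw [hmul (e i) j]; ring]
      rw [Finset.sum_add_distrib, ← Finset.sum_mul]
    have h3 : ν i = (∑ j, lam j * (e i j * e i j))
          + (∑ m, w m * e i m) * (∑ m, w m * e i m) := by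
      rw [← h2, he_eig i, h1]
    have h4 : lam L ≤ ∑ j, lam j * (e i j * e i j) := by
      have : lam L = ∑ j, lam L * (e i j * e i j) := by
        rw [← Finset.mul_sum, he_norm i, mul_one]
      rw [this]
      apply Finset.sum_le_sum
      intro j _
      exact mul_le_mul_of_nonneg_right (hlamL j) (mul_self_nonneg _)
    have h5 : lam L ≤ ν i := by
      rw [h3]
      nlinarith [mul_self_nonneg (∑ m, w m * e i m)]
    exact lt_of_le_of_ne h5 (Ne.symm (hν_ne i L))
  -- the counting function
  set K : Fin d → ℕ := fun i => (Finset.univ.filter fun j => ν i < lam j).card with hKdef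
  have hKlt : ∀ i, K i < d := by
    intro i
    have hsub : (Finset.univ.filter fun j => ν i < lam j) ⊆ Finset.univ.erase L := by
      intro j hj
      rw [Finset.mem_filter] at hj
      rw [Finset.mem_erase]
      refine ⟨?_, Finset.mem_univ j⟩
      rintro rfl
      exact absurd hj.2 (not_lt.mpr (hray i).le)
    have := Finset.card_le_card hsub
    rw [Finset.card_erase_of_mem (Finset.mem_univ L), Finset.card_univ, Fintype.card_fin] at this
    simp only [hKdef]
    omega
  have hKmono : StrictMono fun i => (⟨K i, hKlt i⟩ : Fin d) := by
    intro i k hik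
    rw [Fin.lt_def]
    simp only [hKdef]
    have hsub : (Finset.univ.filter fun j => ν i < lam j)
        ⊆ (Finset.univ.filter fun j => ν k < lam j) := by
      intro j hj
      rw [Finset.mem_filter] at hj ⊢
      exact ⟨hj.1, (hν_sa hik).trans hj.2⟩
    have hneK : (Finset.univ.filter fun j => ν i < lam j).card
        ≠ (Finset.univ.filter fun j => ν k < lam j).card := by
      intro hcard
      have hset : (Finset.univ.filter fun j => ν i < lam j)
          = (Finset.univ.filter fun j => ν k < lam j) :=
        Finset.eq_of_subset_of_card_le hsub (le_of_eq hcard.symm)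
      have hterm : ∀ j : Fin d, w j * w j / (ν i - lam j) < w j * w j / (ν k - lam j) := by
        intro j
        have hik' : ν k < ν i := hν_sa hik
        by_cases hj : ν i < lam j
        · have hjk : ν k < lam j := by
            have : j ∈ Finset.univ.filter fun j => ν k < lam j := by
              rw [← hset, Finset.mem_filter]; exact ⟨Finset.mem_univ j, hj⟩
            exact (Finset.mem_filter.mp this).2
          have hstep : w j * w j / (lam j - ν k) < w j * w j / (lam j - ν i) :=
            div_lt_div_of_pos_left (hw2pos j) (by linarith) (by linarith)
          rw [show ν i - lam j = -(lam j - ν i) by ring,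
            show ν k - lam j = -(lam j - ν k) by ring, div_neg, div_neg]
          linarith
        · have hji' : lam j < ν i :=
            lt_of_le_of_ne (not_lt.mp hj) fun h => hν_ne i j h.symm
          have hjk : lam j < ν k := by
            have hjnot : j ∉ Finset.univ.filter fun j => ν k < lam j := by
              rw [← hset, Finset.mem_filter]
              exact fun hmem => hj hmem.2
            rw [Finset.mem_filter] at hjnot
            push_neg at hjnot
            exact lt_of_le_of_ne (hjnot (Finset.mem_univ j)) fun h => hν_ne k j h.symm
          rw [div_lt_div_iff₀ (by linarith) (by linarith)]
          nlinarith [hw2pos j]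
      have hlt := Finset.sum_lt_sum_of_nonempty Finset.univ_nonempty (fun j _ => hterm j)
      rw [hsec i, hsec k] at hlt
      exact lt_irrefl _ hlt
    exact lt_of_le_of_ne (Finset.card_le_card hsub) hneK
  have hKid : ∀ i : Fin d, K i = i.val := by
    have hrange : Set.range (fun i => (⟨K i, hKlt i⟩ : Fin d)) = Set.range (id : Fin d → Fin d) := by
      rw [Set.range_id]
      rw [Set.range_eq_univ]
      exact Finite.surjective_of_injective hKmono.injective
    have := (hKmono.range_inj strictMono_id).mp hrange
    intro i
    have h := congrFun this i
    exact congrArg Fin.val h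
  -- interlacing
  have hinter_lo : ∀ i : Fin d, lam i < ν i := by
    intro i
    by_contra h
    have hlt : ν i < lam i := lt_of_le_of_ne (not_lt.mp h) (hν_ne i i)
    have hsub : Finset.Iic i ⊆ (Finset.univ.filter fun j => ν i < lam j) := by
      intro j hj
      rw [Finset.mem_Iic] at hj
      rw [Finset.mem_filter]
      exact ⟨Finset.mem_univ j, lt_of_lt_of_le hlt (hlam_strict.antitone hj)⟩
    have hcard := Finset.card_le_card hsub
    rw [Fin.card_Iic] at hcard
    have := hKid i
    simp only [hKdef] at this
    omega
  have hinter_hi : ∀ i j : Fin d, j < i → ν i < lam j := by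
    intro i j hji
    by_contra h
    have hlt : lam j < ν i := lt_of_le_of_ne (not_lt.mp h) fun h' => hν_ne i j h'.symm
    have hsub : (Finset.univ.filter fun m => ν i < lam m) ⊆ Finset.Iio j := by
      intro m hm
      rw [Finset.mem_filter] at hm
      rw [Finset.mem_Iio]
      by_contra hmj
      have : lam m ≤ lam j := hlam_strict.antitone (not_lt.mp hmj)
      linarith [hm.2]
    have hcard := Finset.card_le_card hsub
    rw [Fin.card_Iio] at hcard
    have := hKid i
    simp only [hKdef] at this
    rw [Fin.lt_def] at hji
    omega
  -- main numeric bound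
  intro i
  set W := supNorm hd v with hWdef
  have hW_le : ∀ j, |v j| ≤ W := by
    intro j
    rw [hWdef]
    unfold supNorm
    exact Finset.le_sup' (f := fun k => |v k|) (Finset.mem_univ j)
  have hWpos : 0 < W := lt_of_lt_of_le (abs_pos.mpr (hv i)) (hW_le i)
  have hVW : W ≤ V := by rw [hV]; exact le_max_right _ _
  have hVpos : 0 < V := lt_of_lt_of_le hWpos hVW
  set n : ℝ := (d:ℝ) - (i:ℕ) with hndef
  have hn1 : (1:ℝ) ≤ n := by
    rw [hndef]
    have : ((i:ℕ):ℝ) + 1 ≤ (d:ℝ) := by exact_mod_cast i.isLt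
    linarith
  have hnpos : (0:ℝ) < n := by linarith
  set β := |v (ji i)| with hβdef
  have hβpos : 0 < β := abs_pos.mpr (hv _)
  set t : ℝ := lam (ji i) + 2 * lam i * n * V * β with htdef
  have hji_lam : lam (ji i) ≤ lam i := hlam_strict.antitone (hji_ge i)
  have hkey1 : lam i - lam (ji i) ≤ lam i * n * W * β := by
    have hmem := hji_mem i
    have hs : Real.sqrt (lam (ji i) / lam i) ≤ 1 :=
      Real.sqrt_le_one.mpr (by rw [div_le_one (hlam_pos i)]; exact hji_lam)
    have hP : (0:ℝ) ≤ lam i * n * W * β :=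
      mul_nonneg (mul_nonneg (mul_nonneg (hlam_pos i).le hnpos.le) hWpos.le) hβpos.le
    nlinarith [hmem, mul_nonneg (sub_nonneg.mpr hs) hP]
  have hkey2 : lam i + lam i * n * V * β ≤ t := by
    rw [htdef]
    nlinarith [hkey1, mul_nonneg (sub_nonneg.mpr hVW)
      (mul_nonneg (mul_nonneg (hlam_pos i).le hnpos.le) hβpos.le)]
  have htgt : lam i < t := by
    have : (0:ℝ) < lam i * n * V * β :=
      mul_pos (mul_pos (mul_pos (hlam_pos i) hnpos) hVpos) hβpos
    linarith [hkey2]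
  have hper : ∀ j : Fin d, i ≤ j → n * (lam j * (v j * v j)) ≤ t - lam j := by
    intro j hij
    have hlamji' : lam j ≤ lam i := hlam_strict.antitone hij
    by_cases hc : lam j ≥ lam i * (1 - Real.sqrt (lam j / lam i) * n * W * |v j|)
    · have hvj : |v j| ≤ β := hji_max i j hij hc
      have habs : v j * v j = |v j| * |v j| := (abs_mul_abs_self _).symm
      have h1 : lam j * (v j * v j) ≤ lam i * (β * W) := by
        rw [habs]
        have h2 : |v j| * |v j| ≤ β * W :=
          mul_le_mul hvj (hW_le j) (abs_nonneg _) hβpos.le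
        have hbW : (0:ℝ) ≤ β * W := mul_nonneg hβpos.le hWpos.le
        have t1 : lam j * (|v j| * |v j|) ≤ lam j * (β * W) :=
          mul_le_mul_of_nonneg_left h2 (hlam_pos j).le
        have t2 : lam j * (β * W) ≤ lam i * (β * W) :=
          mul_le_mul_of_nonneg_right hlamji' hbW
        linarith
      have s1 : n * (lam j * (v j * v j)) ≤ n * (lam i * (β * W)) :=
        mul_le_mul_of_nonneg_left h1 hnpos.le
      have s2 : n * (lam i * (β * W)) ≤ n * (lam i * (β * V)) :=
        mul_le_mul_of_nonneg_left (mul_le_mul_of_nonneg_left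
          (mul_le_mul_of_nonneg_left hVW hβpos.le) (hlam_pos i).le) hnpos.le
      have s3 : n * (lam i * (β * V)) ≤ t - lam i := by
        have heq : n * (lam i * (β * V)) = lam i * n * V * β := by ring
        linarith [hkey2]
      linarith
    · push_neg at hc
      have h0 : Real.sqrt (lam j / lam i) * Real.sqrt (lam i) = Real.sqrt (lam j) := by
        rw [← Real.sqrt_mul (div_nonneg (hlam_nn j) (hlam_nn i)) (lam i),
          div_mul_cancel₀ _ (hlam_pos i).ne']
      have hm : Real.sqrt (lam i) * Real.sqrt (lam i) = lam i :=
        Real.mul_self_sqrt (hlam_nn i)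
      have hsplit : lam i * Real.sqrt (lam j / lam i)
          = Real.sqrt (lam i) * Real.sqrt (lam j) := by
        linear_combination Real.sqrt (lam i) * h0 - Real.sqrt (lam j / lam i) * hm
      have hc2 : Real.sqrt (lam i) * Real.sqrt (lam j) * (n * W * |v j|) < lam i - lam j := by
        have hexp : lam i * (1 - Real.sqrt (lam j / lam i) * n * W * |v j|)
            = lam i - lam i * Real.sqrt (lam j / lam i) * (n * W * |v j|) := by ring
        have hmul2 : lam i * Real.sqrt (lam j / lam i) * (n * W * |v j|)
            = Real.sqrt (lam i) * Real.sqrt (lam j) * (n * W * |v j|) := by rw [hsplit]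
        rw [hexp, hmul2] at hc
        linarith
      have h2 : Real.sqrt (lam j) * |v j| ≤ Real.sqrt (lam i) * W :=
        mul_le_mul (Real.sqrt_le_sqrt hlamji') (hW_le j) (abs_nonneg _) (Real.sqrt_nonneg _)
      have h3 : lam j * (v j * v j)
          = (Real.sqrt (lam j) * |v j|) * (Real.sqrt (lam j) * |v j|) := by
        rw [mul_mul_mul_comm, Real.mul_self_sqrt (hlam_nn j), abs_mul_abs_self]
      have h4 := mul_le_mul_of_nonneg_left h2
        (mul_nonneg hnpos.le (mul_nonneg (Real.sqrt_nonneg (lam j)) (abs_nonneg (v j))))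
      rw [h3]
      linarith [h4, hc2, htgt]
  refine ⟨by linarith [hinter_lo i, hji_lam], ?_⟩
  by_contra hcon
  push_neg at hcon
  have htν : t < ν i := by rw [htdef]; linarith [hcon]
  have hterm_le : ∀ j ∈ Finset.Ici i, w j * w j / (t - lam j) ≤ 1 / n := by
    intro j hj
    have hij : i ≤ j := Finset.mem_Ici.mp hj
    have hlamji' : lam j ≤ lam i := hlam_strict.antitone hij
    have hpos : 0 < t - lam j := by linarith [htgt]
    rw [div_le_div_iff₀ hpos hnpos, hw2 j]
    have := hper j hij
    nlinarith [this]

  have hsum_t : (∑ j ∈ Finset.Ici i, w j * w j / (t - lam j)) ≤ 1 := by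
    have hcast : ((d - (i:ℕ) : ℕ) : ℝ) = n := by
      rw [hndef]; push_cast [Nat.cast_sub i.isLt.le]; ring
    calc (∑ j ∈ Finset.Ici i, w j * w j / (t - lam j))
        ≤ ∑ _j ∈ Finset.Ici i, 1 / n := Finset.sum_le_sum hterm_le
      _ = ((Finset.Ici i).card : ℝ) * (1/n) := by rw [Finset.sum_const, nsmul_eq_mul]
      _ = 1 := by rw [Fin.card_Ici, hcast]; field_simp
  have hsum_ν : (∑ j ∈ Finset.Ici i, w j * w j / (ν i - lam j))
      < (∑ j ∈ Finset.Ici i, w j * w j / (t - lam j)) := by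
    apply Finset.sum_lt_sum_of_nonempty ⟨i, Finset.mem_Ici.mpr le_rfl⟩
    intro j hj
    have hij := Finset.mem_Ici.mp hj
    have hl : lam j ≤ lam i := hlam_strict.antitone hij
    exact div_lt_div_of_pos_left (hw2pos j) (by linarith [htgt]) (by linarith [htν])
  have hsum_neg : (∑ j ∈ Finset.Iio i, w j * w j / (ν i - lam j)) ≤ 0 := by
    apply Finset.sum_nonpos
    intro j hj
    have hji' : j < i := Finset.mem_Iio.mp hj
    have := hinter_hi i j hji'
    exact div_nonpos_of_nonneg_of_nonpos (hw2pos j).le (by linarith)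
  have hdecomp : (∑ j, w j * w j / (ν i - lam j))
      = (∑ j ∈ Finset.Iio i, w j * w j / (ν i - lam j))
        + (∑ j ∈ Finset.Ici i, w j * w j / (ν i - lam j)) := by
    have hIio : Finset.univ.filter (fun j => j < i) = Finset.Iio i := by
      ext j; simp [Finset.mem_Iio]
    have hIci : Finset.univ.filter (fun j => ¬ j < i) = Finset.Ici i := by
      ext j; simp [Finset.mem_Ici, not_lt]
    rw [← hIio, ← hIci, Finset.sum_filter_add_sum_filter_not]
  have h1 := hsec i
  rw [hdecomp] at h1
  linarith [hsum_ν, hsum_t, hsum_neg]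
end

section
/- Let D = diag(λ₁,…,λ_d) with λ₁ > … > λ_d > 0, let v ∈ ℝ^d have only nonzero entries, set V = max(d^{-1/2}, ‖v‖_∞), let A = D + √D v vᵀ √D with eigenvalues ν₁ ≥ … ≥ ν_d, and for i ∈ {1,…,d} let e_i be a unit eigenvector of A for ν_i. Then for every i and every ρ ∈ (0,1), the constant C_i determined by [e_i]_j = C_i √λ_j [v]_j/(λ_j − ν_i) for all j satisfies |C_i| ≤ (d−i+1) V √λ_i · max(2(1−ρ)^{-1/2}, 2ρ^{-1}(d−i+1)V²). -/
open Matrix Finset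

private lemma F_strict_lt {d : ℕ} (hd : 0 < d) (lam v : Fin d → ℝ)
    (hlam_pos : ∀ i, 0 < lam i) (hv : ∀ j, v j ≠ 0)
    {x y : ℝ} (hxy : x < y) (hnopole : ∀ l, lam l < x ∨ y < lam l) :
    ∑ k, lam k * v k ^ 2 / (lam k - x) < ∑ k, lam k * v k ^ 2 / (lam k - y) := by
  have hne : (univ : Finset (Fin d)).Nonempty :=
    Finset.univ_nonempty_iff.mpr (Fin.pos_iff_nonempty.mp hd)
  refine Finset.sum_lt_sum_of_nonempty hne fun k _ => ?_
  have hn : 0 < lam k * v k ^ 2 :=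
    mul_pos (hlam_pos k) (pow_pos (abs_pos.mpr (hv k)) 2 |>.trans_le (by rw [sq_abs]))
  set n := lam k * v k ^ 2
  set a := lam k - x with ha
  set b := lam k - y with hb
  have hba : b < a := by simp [ha, hb]; linarith
  have hab : 0 < a * b := by
    rcases hnopole k with h | h
    · have ha0 : a < 0 := by simp [ha]; linarith
      have hb0 : b < 0 := by simp [hb]; linarith
      exact mul_pos_of_neg_of_neg ha0 hb0
    · have ha0 : 0 < a := by simp [ha]; linarith
      have hb0 : 0 < b := by simp [hb]; linarith
      exact mul_pos ha0 hb0
  have ha0 : a ≠ 0 := fun h => by simp [h] at hab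
  have hb0 : b ≠ 0 := fun h => by simp [h] at hab
  have hkey : n / b - n / a = n * (a - b) / (a * b) := by field_simp
  have hpos : 0 < n * (a - b) / (a * b) := div_pos (mul_pos hn (by linarith)) hab
  linarith

set_option maxHeartbeats 1000000 in
/-- Bound on the Bunch–Nielsen–Sorensen normalizing constant `Cᵢ` (Eq. (11) of the
paper): `|Cᵢ| ≤ (d−i+1) V √λᵢ · max(2(1−ρ)^{-1/2}, 2ρ⁻¹(d−i+1)V²)`.
Indices are 0-based, so `d−i+1` of the paper (1-based `i`) becomes `d−i`. -/
theorem BNS_constant_bound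
    {d : ℕ} (hd : 0 < d)
    (lam : Fin d → ℝ) (hlam_strict : StrictAnti lam) (hlam_pos : ∀ i, 0 < lam i)
    (v : Fin d → ℝ) (hv : ∀ j, v j ≠ 0)
    (V : ℝ) (hV : V = max (1 / Real.sqrt d) (supNorm hd v))
    (A : Matrix (Fin d) (Fin d) ℝ)
    (hA : A = Matrix.diagonal lam +
      (Matrix.diagonal fun i => Real.sqrt (lam i)) * Matrix.vecMulVec v v *
      (Matrix.diagonal fun i => Real.sqrt (lam i)))
    (ν : Fin d → ℝ) (hν_anti : Antitone ν)
    (e : Fin d → Fin d → ℝ)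
    (he_orth : ∀ i j, e i ⬝ᵥ e j = if i = j then (1 : ℝ) else 0)
    (he_eig : ∀ i, A.mulVec (e i) = ν i • e i)
    (C : Fin d → ℝ)
    (hC : ∀ i j : Fin d, e i j = C i * (Real.sqrt (lam j) * v j / (lam j - ν i))) :
    ∀ i : Fin d, ∀ ρ : ℝ, 0 < ρ → ρ < 1 →
      |C i| ≤ ((d : ℝ) - (i : ℕ)) * V * Real.sqrt (lam i) *
        max (2 * (Real.sqrt (1 - ρ))⁻¹) (2 * ρ⁻¹ * ((d : ℝ) - (i : ℕ)) * V ^ 2) := by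
  classical
  set g : Fin d → ℝ := fun k => Real.sqrt (lam k) with hg
  have hgpos : ∀ k, 0 < g k := fun k => Real.sqrt_pos.mpr (hlam_pos k)
  have hgsq : ∀ k, g k ^ 2 = lam k := fun k => Real.sq_sqrt (hlam_pos k).le
  have hgv : ∀ k, g k * v k ≠ 0 := fun k => mul_ne_zero (hgpos k).ne' (hv k)
  set s : Fin d → ℝ := fun i => ∑ l, g l * v l * e i l with hs
  -- componentwise eigen-equation
  have key : ∀ i k, (lam k - ν i) * e i k = -(g k * v k) * s i := by
    intro i k
    have h := congrFun (he_eig i) k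
    rw [hA] at h
    rw [Matrix.add_mulVec] at h
    have h1 : Matrix.diagonal g *ᵥ e i = fun l => g l * e i l :=
      funext fun l => Matrix.mulVec_diagonal _ _ _
    have h2 : (Matrix.diagonal g * Matrix.vecMulVec v v * Matrix.diagonal g) *ᵥ e i
        = fun k => g k * (v k * s i) := by
      rw [← Matrix.mulVec_mulVec, ← Matrix.mulVec_mulVec, h1]
      funext k
      rw [Matrix.mulVec_diagonal]
      congr 1
      show ∑ l, Matrix.vecMulVec v v k l * (g l * e i l) = v k * s i
      simp only [Matrix.vecMulVec_apply, hs]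
      rw [Finset.mul_sum]
      exact Finset.sum_congr rfl fun l _ => by ring
    rw [h2] at h
    have h3 : (Matrix.diagonal lam *ᵥ e i) k = lam k * e i k := Matrix.mulVec_diagonal _ _ _
    rw [Pi.add_apply, h3] at h
    have h4 : (ν i • e i) k = ν i * e i k := rfl
    rw [h4] at h
    linear_combination h
  have hnorm : ∀ i, ∑ k, e i k ^ 2 = 1 := by
    intro i
    have h := he_orth i i
    rw [if_pos rfl] at h
    simpa [dotProduct, pow_two] using h
  have hne : ∀ i k, lam k ≠ ν i := by
    intro i k0 hk0
    have hs0 : s i = 0 := by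
      have h := key i k0
      rw [hk0, sub_self, zero_mul] at h
      rcases mul_eq_zero.mp h.symm with h1 | h1
      · exact absurd (neg_eq_zero.mp h1) (hgv k0)
      · exact h1
    have hzero : ∀ k, e i k = 0 := by
      intro k
      by_cases hk : lam k = ν i
      · rw [hC i k, hk, sub_self, div_zero, mul_zero]
      · have h := key i k
        rw [hs0, mul_zero] at h
        exact (mul_eq_zero.mp h).resolve_left (sub_ne_zero_of_ne hk)
    have h := hnorm i
    simp [hzero] at h
  have hdne : ∀ i k, lam k - ν i ≠ 0 := fun i k => sub_ne_zero_of_ne (hne i k)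
  have hCs : ∀ i, C i = - s i := by
    intro i
    have h := key i i
    rw [hC i i] at h
    have h2 : C i * (g i * v i) = (- s i) * (g i * v i) := by
      field_simp [hdne i i] at h
      linear_combination h
    exact mul_right_cancel₀ (hgv i) h2
  have hCne : ∀ i, C i ≠ 0 := by
    intro i hCi
    have h := hnorm i
    simp [hC i, hCi] at h
  have hsec : ∀ i, ∑ k, lam k * v k ^ 2 / (lam k - ν i) = -1 := by
    intro i
    have h1 : s i = C i * ∑ k, lam k * v k ^ 2 / (lam k - ν i) := by
      rw [hs]
      simp only [hC i]
      rw [Finset.mul_sum]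
      refine Finset.sum_congr rfl fun k _ => ?_
      have hd0 := hdne i k
      field_simp
      linear_combination (C i * v k ^ 2) * hgsq k
    have h2 := hCs i
    rw [h1] at h2
    have h3 : C i * (∑ k, lam k * v k ^ 2 / (lam k - ν i)) = C i * (-1) := by
      linear_combination h2
    exact mul_left_cancel₀ (hCne i) h3
  have hν_inj : Function.Injective ν := by
    intro a b hab
    by_contra hne'
    have horth := he_orth a b
    rw [if_neg hne'] at horth
    simp only [dotProduct] at horth
    set T := ∑ k, (g k * v k / (lam k - ν a)) ^ 2 with hT
    have hTa : (1:ℝ) = C a ^ 2 * T := by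
      rw [hT, Finset.mul_sum, ← hnorm a]
      exact Finset.sum_congr rfl fun k _ => by rw [hC a k]; ring
    have h1 : C a * C b * T = 0 := by
      rw [hT, Finset.mul_sum, ← horth]
      refine Finset.sum_congr rfl fun k _ => ?_
      rw [hC a k, hC b k, hab]
      ring
    rcases mul_eq_zero.mp h1 with h | h
    · rcases mul_eq_zero.mp h with h | h
      · exact hCne a h
      · exact hCne b h
    · rw [h, mul_zero] at hTa; exact one_ne_zero hTa
  have hstrict : StrictAnti ν := hν_anti.strictAnti_of_injective hν_inj
  have hinterlace : ∀ i k : Fin d, k < i → ν i < lam k := by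
    intro i k hki
    rcases lt_trichotomy (ν i) (lam k) with hcase | hcase | hcase
    · exact hcase
    · exact absurd hcase.symm (hne i k)
    · exfalso
      set m : Fin d → ℕ := fun j => (univ.filter fun l => ν j < lam l).card with hm
      have hmono_m : ∀ a b : Fin d, a < b → m a < m b := by
        intro a b hab
        have hba : ν b < ν a := hstrict hab
        have hex : ∃ l, ν b < lam l ∧ lam l < ν a := by
          by_contra hno
          push_neg at hno
          have hlt := F_strict_lt hd lam v hlam_pos hv hba (fun l => ?_)
          · rw [hsec a, hsec b] at hlt; exact lt_irrefl _ hlt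
          · rcases lt_trichotomy (lam l) (ν b) with h | h | h
            · exact Or.inl h
            · exact absurd h (hne b l)
            · exact Or.inr (lt_of_le_of_ne (hno l h) (hne a l).symm)
        obtain ⟨l0, hl0b, hl0a⟩ := hex
        apply Finset.card_lt_card
        constructor
        · intro l hl
          rw [Finset.mem_filter] at hl ⊢
          exact ⟨hl.1, hba.trans hl.2⟩
        · intro hsub
          have : l0 ∈ univ.filter fun l => ν b < lam l := by
            rw [Finset.mem_filter]; exact ⟨Finset.mem_univ _, hl0b⟩
          have := hsub this
          rw [Finset.mem_filter] at this
          exact absurd this.2 (not_lt.mpr hl0a.le)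
      have hinj : Set.InjOn m (Finset.Iic i : Finset (Fin d)) := by
        intro a _ b _ hab
        rcases lt_trichotomy a b with h | h | h
        · exact absurd hab (hmono_m a b h).ne
        · exact h
        · exact absurd hab.symm (hmono_m b a h).ne
      have hbound : ∀ j ∈ Finset.Iic i, m j ∈ Finset.range (k + 1) := by
        intro j hj
        rw [Finset.mem_Iic] at hj
        rw [Finset.mem_range, Nat.lt_succ_iff, hm]
        have hsub : (univ.filter fun l => ν j < lam l) ⊆ Finset.Iio k := by
          intro l hl
          rw [Finset.mem_filter] at hl
          rw [Finset.mem_Iio]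
          have h1 : lam k < lam l := by
            have := hν_anti hj
            linarith [hl.2, hcase]
          exact hlam_strict.lt_iff_gt.mp h1
        calc (univ.filter fun l => ν j < lam l).card ≤ (Finset.Iio k).card :=
              Finset.card_le_card hsub
          _ = k := Fin.card_Iio k
      have hcard := Finset.card_le_card_of_injOn m hbound hinj
      rw [Fin.card_Iic, Finset.card_range] at hcard
      have : (k:ℕ) < (i:ℕ) := hki
      omega
  intro i ρ hρ0 hρ1
  set Tf : Finset (Fin d) := univ.filter (fun k => i ≤ k) with hTf
  have hTfIci : Tf = Finset.Ici i := by
    ext l; simp [hTf, Finset.mem_Ici]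
  have hTcard : (Tf.card : ℝ) = (d : ℝ) - (i:ℕ) := by
    rw [hTfIci, Fin.card_Ici, Nat.cast_sub i.isLt.le]
  set t : Fin d → ℝ := fun k => g k * v k / (lam k - ν i) with ht
  have hCT : C i ^ 2 * ∑ k, t k ^ 2 = 1 := by
    rw [Finset.mul_sum, ← hnorm i]
    exact Finset.sum_congr rfl fun k _ => by rw [hC i k]; ring
  -- the sum over k < i is nonnegative
  have hsplit := Finset.sum_filter_add_sum_filter_not univ (fun k => i ≤ k)
    (fun k => lam k * v k ^ 2 / (lam k - ν i))
  have hcompl : 0 ≤ ∑ k ∈ univ.filter (fun k => ¬ i ≤ k), lam k * v k ^ 2 / (lam k - ν i) := by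
    refine Finset.sum_nonneg fun k hk => ?_
    rw [Finset.mem_filter, not_le] at hk
    have hpos : 0 < lam k - ν i := sub_pos.mpr (hinterlace i k hk.2)
    exact div_nonneg (mul_nonneg (hlam_pos k).le (sq_nonneg _)) hpos.le
  have hTneg : ∑ k ∈ Tf, lam k * v k ^ 2 / (lam k - ν i) ≤ -1 := by
    rw [hsec i] at hsplit
    rw [hTf]; linarith
  have habs : (1:ℝ) ≤ ∑ k ∈ Tf, lam k * v k ^ 2 / |lam k - ν i| := by
    have hterm : ∀ k ∈ Tf, -(lam k * v k ^ 2 / (lam k - ν i)) ≤ lam k * v k ^ 2 / |lam k - ν i| := by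
      intro k _
      have hnum : 0 ≤ lam k * v k ^ 2 := mul_nonneg (hlam_pos k).le (sq_nonneg _)
      rcases (hdne i k).lt_or_gt with h | h
      · rw [abs_of_neg h, div_neg]
      · rw [abs_of_pos h]
        have h1 : 0 ≤ lam k * v k ^ 2 / (lam k - ν i) := div_nonneg hnum h.le
        linarith
    have h2 := Finset.sum_le_sum hterm
    rw [Finset.sum_neg_distrib] at h2
    linarith
  -- Cauchy-Schwarz
  set f : Fin d → ℝ := fun k => g k * |v k| with hf
  set gg : Fin d → ℝ := fun k => f k / |lam k - ν i| with hgg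
  have hCS := Finset.sum_mul_sq_le_sq_mul_sq Tf f gg
  have hfg : ∀ k, f k * gg k = lam k * v k ^ 2 / |lam k - ν i| := by
    intro k
    show (g k * |v k|) * ((g k * |v k|) / |lam k - ν i|) = _
    rw [mul_div_assoc']
    congr 1
    linear_combination |v k| ^ 2 * hgsq k + lam k * sq_abs (v k)
  have hggsq : ∀ k, gg k ^ 2 = t k ^ 2 := by
    intro k
    show ((g k * |v k|) / |lam k - ν i|) ^ 2 = (g k * v k / (lam k - ν i)) ^ 2
    rw [div_pow, div_pow, sq_abs, mul_pow, mul_pow, sq_abs]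
  have hfsq : ∀ k ∈ Tf, f k ^ 2 ≤ lam i * V ^ 2 := by
    intro k hk
    rw [hTfIci, Finset.mem_Ici] at hk
    have h1 : f k ^ 2 = lam k * v k ^ 2 := by
      show (g k * |v k|) ^ 2 = _
      rw [mul_pow, hgsq k, sq_abs]
    rw [h1]
    have h2 : lam k ≤ lam i := hlam_strict.antitone hk
    have h3 : |v k| ≤ V := by
      rw [hV]
      exact le_max_of_le_right (Finset.le_sup' (fun j => |v j|) (Finset.mem_univ k))
    have h4 : v k ^ 2 ≤ V ^ 2 := by
      rw [← sq_abs]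
      exact pow_le_pow_left₀ (abs_nonneg _) h3 2
    exact mul_le_mul h2 h4 (sq_nonneg _) (hlam_pos i).le
  have hV0 : 0 < V := by
    rw [hV]
    have h0 : 0 < 1 / Real.sqrt d := by
      have : (0:ℝ) < Real.sqrt d := Real.sqrt_pos.mpr (by exact_mod_cast hd)
      positivity
    exact lt_of_lt_of_le h0 (le_max_left _ _)
  set Dd : ℝ := (d:ℝ) - (i:ℕ) with hDd
  have hDd1 : (1:ℝ) ≤ Dd := by
    have h1 : (i:ℕ) + 1 ≤ d := i.isLt
    have h2 := (Nat.cast_le (α := ℝ)).mpr h1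
    push_cast at h2
    rw [hDd]; linarith
  have hsum_f : ∑ k ∈ Tf, f k ^ 2 ≤ Dd * (lam i * V ^ 2) := by
    have h := Finset.sum_le_card_nsmul Tf (fun k => f k ^ 2) (lam i * V ^ 2) hfsq
    rw [nsmul_eq_mul, hTcard] at h
    exact h
  have hsum_g : ∑ k ∈ Tf, gg k ^ 2 ≤ ∑ k, t k ^ 2 := by
    calc ∑ k ∈ Tf, gg k ^ 2 = ∑ k ∈ Tf, t k ^ 2 := Finset.sum_congr rfl fun k _ => hggsq k
      _ ≤ ∑ k, t k ^ 2 := Finset.sum_le_sum_of_subset_of_nonneg (Finset.subset_univ _)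
          (fun k _ _ => sq_nonneg _)
  have h1le : (1:ℝ) ≤ ∑ k ∈ Tf, f k * gg k := by
    calc (1:ℝ) ≤ ∑ k ∈ Tf, lam k * v k ^ 2 / |lam k - ν i| := habs
      _ = ∑ k ∈ Tf, f k * gg k := Finset.sum_congr rfl fun k _ => (hfg k).symm
  have hS : 0 < ∑ k, t k ^ 2 := by
    by_contra hcon
    push_neg at hcon
    have hz : ∑ k, t k ^ 2 = 0 :=
      le_antisymm hcon (Finset.sum_nonneg fun k _ => sq_nonneg _)
    rw [hz, mul_zero] at hCT
    exact one_ne_zero hCT.symm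
  have hCineq : C i ^ 2 ≤ Dd * (lam i * V ^ 2) := by
    have h2 : (1:ℝ) ≤ (∑ k ∈ Tf, f k * gg k) ^ 2 := by nlinarith [h1le]
    have hggnn : (0:ℝ) ≤ ∑ k ∈ Tf, gg k ^ 2 := Finset.sum_nonneg fun k _ => sq_nonneg _
    have hBnn : (0:ℝ) ≤ Dd * (lam i * V ^ 2) :=
      mul_nonneg (by linarith) (mul_nonneg (hlam_pos i).le (sq_nonneg V))
    have h3 : (∑ k ∈ Tf, f k ^ 2) * (∑ k ∈ Tf, gg k ^ 2)
        ≤ (Dd * (lam i * V ^ 2)) * ∑ k, t k ^ 2 :=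
      mul_le_mul hsum_f hsum_g hggnn hBnn
    have h4 : (1:ℝ) ≤ (Dd * (lam i * V ^ 2)) * ∑ k, t k ^ 2 :=
      le_trans (le_trans h2 hCS) h3
    have h5 : C i ^ 2 = 1 / ∑ k, t k ^ 2 := by
      rw [eq_div_iff hS.ne']; exact hCT
    rw [h5, div_le_iff₀ hS]
    exact h4
  set M : ℝ := max (2 * (Real.sqrt (1 - ρ))⁻¹) (2 * ρ⁻¹ * Dd * V ^ 2) with hM
  have hM2 : (2:ℝ) ≤ M := by
    have hs1 : Real.sqrt (1 - ρ) ≤ 1 := Real.sqrt_le_one.mpr (by linarith)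
    have hs0 : 0 < Real.sqrt (1 - ρ) := Real.sqrt_pos.mpr (by linarith)
    have hinv : (1:ℝ) ≤ (Real.sqrt (1 - ρ))⁻¹ := by
      rw [le_inv_comm₀ one_pos hs0]
      simpa using hs1
    calc (2:ℝ) = 2 * 1 := by ring
      _ ≤ 2 * (Real.sqrt (1 - ρ))⁻¹ := by linarith
      _ ≤ M := le_max_left _ _
  have hDd0 : (0:ℝ) ≤ Dd := zero_le_one.trans hDd1
  have hM0 : (0:ℝ) ≤ M := (by norm_num : (0:ℝ) ≤ 2).trans hM2
  have hR0 : 0 ≤ Dd * V * g i * M :=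
    mul_nonneg (mul_nonneg (mul_nonneg hDd0 hV0.le) (hgpos i).le) hM0
  have hfin : C i ^ 2 ≤ (Dd * V * g i * M) ^ 2 := by
    have hBnn : (0:ℝ) ≤ Dd * (lam i * V ^ 2) :=
      mul_nonneg hDd0 (mul_nonneg (hlam_pos i).le (sq_nonneg V))
    have h4M : (4:ℝ) ≤ M ^ 2 := by
      calc (4:ℝ) = 2 * 2 := by norm_num
        _ ≤ M * M := mul_le_mul hM2 hM2 (by norm_num) hM0
        _ = M ^ 2 := (sq M).symm
    have h6 : (1:ℝ) ≤ Dd * M ^ 2 :=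
      calc (1:ℝ) = 1 * 1 := by norm_num
        _ ≤ Dd * M ^ 2 := mul_le_mul hDd1 (le_trans (by norm_num) h4M) (by norm_num) hDd0
    calc C i ^ 2 ≤ Dd * (lam i * V ^ 2) := hCineq
      _ = Dd * (lam i * V ^ 2) * 1 := by ring
      _ ≤ Dd * (lam i * V ^ 2) * (Dd * M ^ 2) := by
          exact mul_le_mul_of_nonneg_left h6 hBnn
      _ = Dd ^ 2 * M ^ 2 * V ^ 2 * lam i := by ring
      _ = (Dd * V * g i * M) ^ 2 := by
          rw [show (Dd * V * g i * M) ^ 2 = Dd ^ 2 * M ^ 2 * V ^ 2 * g i ^ 2 from by ring,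
            hgsq i]
  calc |C i| = Real.sqrt (C i ^ 2) := (Real.sqrt_sq_eq_abs _).symm
    _ ≤ Real.sqrt ((Dd * V * g i * M) ^ 2) := Real.sqrt_le_sqrt hfin
    _ = Dd * V * g i * M := Real.sqrt_sq hR0
end

section
/- Let D = diag(λ₁,…,λ_d) with λ₁ ≥ … ≥ λ_d > 0, let v^{(1)},…,v^{(m)} ∈ ℝ^d, and let A^{(m)} = D + √D (Σ_{k=1}^m v^{(k)}(v^{(k)})ᵀ) √D with eigenvalues ν₁ ≥ … ≥ ν_d. Then for every i ∈ {1,…,d}, λ_i ≤ ν_i ≤ λ_i · (1 + m d · max_{k=1,…,m} ‖v^{(k)}‖_∞²). -/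
open Matrix Finset

section EVBHelpers
variable {d : ℕ}

private lemma dotProduct_sum' {ι : Type*} (x : Fin d → ℝ) (s : Finset ι) (f : ι → Fin d → ℝ) :
    x ⬝ᵥ (∑ j ∈ s, f j) = ∑ j ∈ s, x ⬝ᵥ f j := by
  simp only [dotProduct, Finset.sum_apply, Finset.mul_sum]
  exact Finset.sum_comm

private lemma sum_dotProduct' {ι : Type*} (x : Fin d → ℝ) (s : Finset ι) (f : ι → Fin d → ℝ) :
    (∑ j ∈ s, f j) ⬝ᵥ x = ∑ j ∈ s, f j ⬝ᵥ x := by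
  rw [dotProduct_comm, dotProduct_sum']
  exact Finset.sum_congr rfl fun j _ => dotProduct_comm _ _

private lemma mulVec_sum' {ι : Type*} (M : Matrix (Fin d) (Fin d) ℝ) (s : Finset ι)
    (f : ι → Fin d → ℝ) :
    M *ᵥ (∑ j ∈ s, f j) = ∑ j ∈ s, M *ᵥ f j := by
  simp only [← Matrix.mulVecLin_apply, map_sum]

private lemma sum_mulVec' {ι : Type*} (s : Finset ι) (M : ι → Matrix (Fin d) (Fin d) ℝ)
    (y : Fin d → ℝ) :
    (∑ k ∈ s, M k) *ᵥ y = ∑ k ∈ s, M k *ᵥ y := by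
  ext j
  simp only [Matrix.mulVec, dotProduct, Finset.sum_apply, Matrix.sum_apply, Finset.sum_mul]
  exact Finset.sum_comm

private lemma vecMulVec_mulVec' (w u y : Fin d → ℝ) :
    (Matrix.vecMulVec w u) *ᵥ y = (u ⬝ᵥ y) • w := by
  ext j
  simp only [Matrix.mulVec, Matrix.vecMulVec_apply, dotProduct, Pi.smul_apply, smul_eq_mul,
    Finset.sum_mul]
  exact Finset.sum_congr rfl fun l _ => by ring

private lemma dotProduct_self_nonneg' (x : Fin d → ℝ) : 0 ≤ x ⬝ᵥ x :=
  Finset.sum_nonneg fun j _ => mul_self_nonneg (x j)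

private lemma repr_of_mem_span {g : Fin d → Fin d → ℝ}
    (hg : ∀ i j, g i ⬝ᵥ g j = if i = j then (1:ℝ) else 0)
    (s : Finset (Fin d)) {x : Fin d → ℝ}
    (hx : x ∈ Submodule.span ℝ (g '' ↑s)) :
    x = ∑ j ∈ s, (x ⬝ᵥ g j) • g j := by
  induction hx using Submodule.span_induction with
  | mem z hz =>
      obtain ⟨k, hk, rfl⟩ := hz
      have : ∀ j ∈ s, (g k ⬝ᵥ g j) • g j = if k = j then g j else 0 := by
        intro j _
        rw [hg k j]
        split <;> simp
      rw [Finset.sum_congr rfl this, Finset.sum_ite_eq, if_pos (by exact_mod_cast hk)]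
  | zero => simp
  | add x y hx hy ihx ihy =>
      conv_lhs => rw [ihx, ihy]
      rw [← Finset.sum_add_distrib]
      exact Finset.sum_congr rfl fun j _ => by rw [add_dotProduct, add_smul]
  | smul a x hx ih =>
      conv_lhs => rw [ih]
      rw [Finset.smul_sum]
      exact Finset.sum_congr rfl fun j _ => by rw [smul_dotProduct, smul_assoc]

private lemma norm_eval {g : Fin d → Fin d → ℝ}
    (hg : ∀ i j, g i ⬝ᵥ g j = if i = j then (1:ℝ) else 0)
    (s : Finset (Fin d)) {x : Fin d → ℝ}
    (hx : x ∈ Submodule.span ℝ (g '' ↑s)) :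
    x ⬝ᵥ x = ∑ j ∈ s, (x ⬝ᵥ g j)^2 := by
  nth_rewrite 2 [repr_of_mem_span hg s hx]
  rw [dotProduct_sum']
  exact Finset.sum_congr rfl fun j _ => by rw [dotProduct_smul, smul_eq_mul, sq]

private lemma quad_eval {M : Matrix (Fin d) (Fin d) ℝ} {g : Fin d → Fin d → ℝ} {μ : Fin d → ℝ}
    (hg : ∀ i j, g i ⬝ᵥ g j = if i = j then (1:ℝ) else 0)
    (heig : ∀ j, M *ᵥ g j = μ j • g j)
    (s : Finset (Fin d)) {x : Fin d → ℝ}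
    (hx : x ∈ Submodule.span ℝ (g '' ↑s)) :
    x ⬝ᵥ (M *ᵥ x) = ∑ j ∈ s, μ j * (x ⬝ᵥ g j)^2 := by
  nth_rewrite 2 [repr_of_mem_span hg s hx]
  rw [mulVec_sum', dotProduct_sum']
  refine Finset.sum_congr rfl fun j _ => ?_
  rw [Matrix.mulVec_smul, heig j, dotProduct_smul, dotProduct_smul]
  simp [smul_eq_mul]; ring

private lemma lin_indep {g : Fin d → Fin d → ℝ}
    (hg : ∀ i j, g i ⬝ᵥ g j = if i = j then (1:ℝ) else 0) :
    LinearIndependent ℝ g := by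
  rw [linearIndependent_iff']
  intro s c hsum i hi
  have h0 : (∑ j ∈ s, c j • g j) ⬝ᵥ g i = 0 := by rw [hsum, zero_dotProduct]
  rw [sum_dotProduct'] at h0
  have : ∀ j ∈ s, (c j • g j) ⬝ᵥ g i = if j = i then c j else 0 := by
    intro j _
    rw [smul_dotProduct, hg j i, smul_eq_mul]
    split <;> simp
  rw [Finset.sum_congr rfl this, Finset.sum_ite_eq', if_pos hi] at h0
  exact h0

private lemma finrank_span_orth {g : Fin d → Fin d → ℝ}
    (hg : ∀ i j, g i ⬝ᵥ g j = if i = j then (1:ℝ) else 0)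
    (s : Finset (Fin d)) :
    Module.finrank ℝ (Submodule.span ℝ (g '' ↑s)) = s.card := by
  have hli := (lin_indep hg).comp (Subtype.val : {j // j ∈ s} → Fin d) Subtype.val_injective
  have : g '' ↑s = Set.range ((g ∘ (Subtype.val : {j // j ∈ s} → Fin d))) := by
    ext z
    simp [Set.range_comp]
  rw [this, finrank_span_eq_card hli, Fintype.card_coe]

private lemma exists_nonzero_inter {g h : Fin d → Fin d → ℝ}
    (hg : ∀ i j, g i ⬝ᵥ g j = if i = j then (1:ℝ) else 0)
    (hh : ∀ i j, h i ⬝ᵥ h j = if i = j then (1:ℝ) else 0)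
    (s t : Finset (Fin d)) (hcard : d < s.card + t.card) :
    ∃ x : Fin d → ℝ, x ≠ 0 ∧ x ∈ Submodule.span ℝ (g '' ↑s) ∧
      x ∈ Submodule.span ℝ (h '' ↑t) := by
  set S := Submodule.span ℝ (g '' ↑s)
  set T := Submodule.span ℝ (h '' ↑t)
  have hS : Module.finrank ℝ S = s.card := finrank_span_orth hg s
  have hT : Module.finrank ℝ T = t.card := finrank_span_orth hh t
  have hsup : Module.finrank ℝ ↥(S ⊔ T) ≤ d := by
    have := Submodule.finrank_le (S ⊔ T)
    simpa [Module.finrank_fin_fun] using this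
  have heq := Submodule.finrank_sup_add_finrank_inf_eq S T
  have hpos : 0 < Module.finrank ℝ ↥(S ⊓ T) := by omega
  have : Nontrivial ↥(S ⊓ T) := Module.nontrivial_of_finrank_pos hpos
  obtain ⟨y, hy⟩ := exists_ne (0 : ↥(S ⊓ T))
  exact ⟨y.1, fun hy0 => hy (Subtype.ext hy0), y.2.1, y.2.2⟩

end EVBHelpers

private lemma quad_compare {d m : ℕ} (hd : 0 < d) (hm : 0 < m)
    (lam : Fin d → ℝ) (hlam_pos : ∀ i, 0 < lam i)
    (v : Fin m → Fin d → ℝ)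
    (A : Matrix (Fin d) (Fin d) ℝ)
    (hA : A = Matrix.diagonal lam +
      (Matrix.diagonal fun i => Real.sqrt (lam i)) *
        (∑ k, Matrix.vecMulVec (v k) (v k)) *
      (Matrix.diagonal fun i => Real.sqrt (lam i)))
    (x : Fin d → ℝ) :
    x ⬝ᵥ (Matrix.diagonal lam *ᵥ x) ≤ x ⬝ᵥ (A *ᵥ x) ∧
    x ⬝ᵥ (A *ᵥ x) ≤ (1 + (m : ℝ) * (d : ℝ) *
        Finset.univ.sup' (Finset.univ_nonempty_iff.mpr (Fin.pos_iff_nonempty.mp hm))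
          (fun k => supNorm hd (v k) ^ 2)) * (x ⬝ᵥ (Matrix.diagonal lam *ᵥ x)) := by
  set c₀ := Finset.univ.sup' (Finset.univ_nonempty_iff.mpr (Fin.pos_iff_nonempty.mp hm))
      (fun k => supNorm hd (v k) ^ 2) with hc0
  set y : Fin d → ℝ := fun j => Real.sqrt (lam j) * x j with hy
  have hyy : y ⬝ᵥ y = x ⬝ᵥ (Matrix.diagonal lam *ᵥ x) := by
    simp only [dotProduct, Matrix.mulVec_diagonal, hy]
    refine Finset.sum_congr rfl fun j _ => ?_
    have h := Real.mul_self_sqrt (hlam_pos j).le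
    calc Real.sqrt (lam j) * x j * (Real.sqrt (lam j) * x j)
        = Real.sqrt (lam j) * Real.sqrt (lam j) * (x j * x j) := by ring
      _ = x j * (lam j * x j) := by rw [h]; ring
  have hAq : x ⬝ᵥ (A *ᵥ x) = x ⬝ᵥ (Matrix.diagonal lam *ᵥ x) + ∑ k, (v k ⬝ᵥ y)^2 := by
    subst hA
    rw [Matrix.add_mulVec, dotProduct_add]
    congr 1
    rw [← Matrix.mulVec_mulVec, ← Matrix.mulVec_mulVec]
    have hsq : (Matrix.diagonal fun i => Real.sqrt (lam i)) *ᵥ x = y := by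
      ext j; simp [Matrix.mulVec_diagonal, hy]
    rw [hsq]
    have hVy : (∑ k, Matrix.vecMulVec (v k) (v k)) *ᵥ y = ∑ k, (v k ⬝ᵥ y) • v k := by
      rw [sum_mulVec']
      exact Finset.sum_congr rfl fun k _ => vecMulVec_mulVec' _ _ _
    rw [hVy]
    have hsym : ∀ z, x ⬝ᵥ ((Matrix.diagonal fun i => Real.sqrt (lam i)) *ᵥ z) = y ⬝ᵥ z := by
      intro z
      simp only [dotProduct, Matrix.mulVec_diagonal, hy]
      exact Finset.sum_congr rfl fun j _ => by ring
    rw [hsym, dotProduct_sum']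
    refine Finset.sum_congr rfl fun k _ => ?_
    rw [dotProduct_smul, smul_eq_mul, dotProduct_comm, sq]
  have hDnn : 0 ≤ x ⬝ᵥ (Matrix.diagonal lam *ᵥ x) := hyy ▸ dotProduct_self_nonneg' y
  constructor
  · rw [hAq]
    exact le_add_of_nonneg_right (Finset.sum_nonneg fun k _ => sq_nonneg _)
  · rw [hAq]
    have hk : ∀ k : Fin m, (v k ⬝ᵥ y)^2 ≤ ((d : ℝ) * c₀) * (x ⬝ᵥ (Matrix.diagonal lam *ᵥ x)) := by
      intro k
      have hcs : (v k ⬝ᵥ y)^2 ≤ (∑ j, (v k j)^2) * (∑ j, (y j)^2) :=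
        sum_mul_sq_le_sq_mul_sq Finset.univ (v k) y
      have hyy2 : (∑ j, (y j)^2) = x ⬝ᵥ (Matrix.diagonal lam *ᵥ x) := by
        rw [← hyy]; exact Finset.sum_congr rfl fun j _ => sq (y j) ▸ rfl
      have hv2 : (∑ j, (v k j)^2) ≤ (d : ℝ) * c₀ := by
        have hb : ∀ j : Fin d, (v k j)^2 ≤ c₀ := by
          intro j
          have h1 : |v k j| ≤ supNorm hd (v k) :=
            Finset.le_sup' (fun j => |v k j|) (Finset.mem_univ j)
          have h2 : (v k j)^2 ≤ supNorm hd (v k)^2 := by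
            rw [← sq_abs]
            exact pow_le_pow_left₀ (abs_nonneg _) h1 2
          exact h2.trans (Finset.le_sup' (fun k => supNorm hd (v k) ^ 2) (Finset.mem_univ k))
        calc (∑ j, (v k j)^2) ≤ ∑ _j : Fin d, c₀ := Finset.sum_le_sum fun j _ => hb j
          _ = (d : ℝ) * c₀ := by simp [Finset.sum_const, nsmul_eq_mul]
      calc (v k ⬝ᵥ y)^2 ≤ (∑ j, (v k j)^2) * (x ⬝ᵥ (Matrix.diagonal lam *ᵥ x)) := by
            rw [← hyy2]; exact hcs
        _ ≤ ((d : ℝ) * c₀) * (x ⬝ᵥ (Matrix.diagonal lam *ᵥ x)) :=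
            mul_le_mul_of_nonneg_right hv2 hDnn
    have hsum : (∑ k, (v k ⬝ᵥ y)^2)
        ≤ (m : ℝ) * (((d : ℝ) * c₀) * (x ⬝ᵥ (Matrix.diagonal lam *ᵥ x))) := by
      calc (∑ k, (v k ⬝ᵥ y)^2)
          ≤ ∑ _k : Fin m, ((d : ℝ) * c₀) * (x ⬝ᵥ (Matrix.diagonal lam *ᵥ x)) :=
            Finset.sum_le_sum fun k _ => hk k
        _ = (m : ℝ) * (((d : ℝ) * c₀) * (x ⬝ᵥ (Matrix.diagonal lam *ᵥ x))) := by
            simp [Finset.sum_const, nsmul_eq_mul]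
    nlinarith [hsum]

/-- **Relative eigenvalue bounds for a perturbation by a sum of m rank-one matrices:**
`λᵢ ≤ νᵢ ≤ λᵢ (1 + m d max_k ‖v⁽ᵏ⁾‖_∞²)`. -/
theorem eigenvalue_bounds_rank_m
    {d m : ℕ} (hd : 0 < d) (hm : 0 < m)
    (lam : Fin d → ℝ) (hlam_anti : Antitone lam) (hlam_pos : ∀ i, 0 < lam i)
    (v : Fin m → Fin d → ℝ)
    (A : Matrix (Fin d) (Fin d) ℝ)
    (hA : A = Matrix.diagonal lam +
      (Matrix.diagonal fun i => Real.sqrt (lam i)) *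
        (∑ k, Matrix.vecMulVec (v k) (v k)) *
      (Matrix.diagonal fun i => Real.sqrt (lam i)))
    (ν : Fin d → ℝ) (hν_anti : Antitone ν)
    (e : Fin d → Fin d → ℝ)
    (he_orth : ∀ i j, e i ⬝ᵥ e j = if i = j then (1 : ℝ) else 0)
    (he_eig : ∀ i, A.mulVec (e i) = ν i • e i) :
    ∀ i : Fin d,
      lam i ≤ ν i ∧
      ν i ≤ lam i * (1 + (m : ℝ) * (d : ℝ) *
        Finset.univ.sup' (Finset.univ_nonempty_iff.mpr (Fin.pos_iff_nonempty.mp hm))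
          (fun k => supNorm hd (v k) ^ 2)) := by
  intro i
  set c₀ := Finset.univ.sup' (Finset.univ_nonempty_iff.mpr (Fin.pos_iff_nonempty.mp hm))
      (fun k => supNorm hd (v k) ^ 2) with hc0
  have hc0nn : 0 ≤ c₀ := le_trans (sq_nonneg (supNorm hd (v ⟨0, hm⟩)))
    (Finset.le_sup' (fun k => supNorm hd (v k) ^ 2) (Finset.mem_univ ⟨0, hm⟩))
  set f : Fin d → Fin d → ℝ := fun j => Pi.single j 1 with hf
  have hf_orth : ∀ i j, f i ⬝ᵥ f j = if i = j then (1 : ℝ) else 0 := by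
    intro a b
    simp only [hf, dotProduct, Pi.single_apply]
    by_cases h : a = b
    · subst h; simp
    · rw [if_neg h]
      refine Finset.sum_eq_zero fun k _ => ?_
      by_cases h1 : k = a
      · subst h1; simp [h]
      · rw [if_neg h1, zero_mul]
  have hf_eig : ∀ j, (Matrix.diagonal lam) *ᵥ f j = lam j • f j := by
    intro j
    ext k
    by_cases h : k = j <;>
      simp [hf, Matrix.mulVec_diagonal, Pi.single_apply, h]
  have hcard1 : d < (Finset.Iic i).card + (Finset.Ici i).card := by
    rw [Fin.card_Iic, Fin.card_Ici]
    have := i.isLt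
    omega
  constructor
  · -- lam i ≤ ν i
    obtain ⟨x, hx0, hxf, hxe⟩ := exists_nonzero_inter hf_orth he_orth
      (Finset.Iic i) (Finset.Ici i) hcard1
    have hxx : 0 < x ⬝ᵥ x :=
      (dotProduct_self_nonneg' x).lt_of_ne fun h => hx0 (dotProduct_self_eq_zero.mp h.symm)
    have hD_ge : lam i * (x ⬝ᵥ x) ≤ x ⬝ᵥ (Matrix.diagonal lam *ᵥ x) := by
      rw [quad_eval hf_orth hf_eig _ hxf, norm_eval hf_orth _ hxf, Finset.mul_sum]
      refine Finset.sum_le_sum fun j hj => ?_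
      exact mul_le_mul_of_nonneg_right (hlam_anti (Finset.mem_Iic.mp hj)) (sq_nonneg _)
    have hA_le : x ⬝ᵥ (A *ᵥ x) ≤ ν i * (x ⬝ᵥ x) := by
      rw [quad_eval he_orth he_eig _ hxe, norm_eval he_orth _ hxe, Finset.mul_sum]
      refine Finset.sum_le_sum fun j hj => ?_
      exact mul_le_mul_of_nonneg_right (hν_anti (Finset.mem_Ici.mp hj)) (sq_nonneg _)
    have hcmp := (quad_compare hd hm lam hlam_pos v A hA x).1
    have : lam i * (x ⬝ᵥ x) ≤ ν i * (x ⬝ᵥ x) := le_trans hD_ge (le_trans hcmp hA_le)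
    exact (mul_le_mul_iff_of_pos_right hxx).mp this
  · -- ν i ≤ lam i * (1 + m d c₀)
    obtain ⟨x, hx0, hxe, hxf⟩ := exists_nonzero_inter he_orth hf_orth
      (Finset.Iic i) (Finset.Ici i) hcard1
    have hxx : 0 < x ⬝ᵥ x :=
      (dotProduct_self_nonneg' x).lt_of_ne fun h => hx0 (dotProduct_self_eq_zero.mp h.symm)
    have hA_ge : ν i * (x ⬝ᵥ x) ≤ x ⬝ᵥ (A *ᵥ x) := by
      rw [quad_eval he_orth he_eig _ hxe, norm_eval he_orth _ hxe, Finset.mul_sum]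
      refine Finset.sum_le_sum fun j hj => ?_
      exact mul_le_mul_of_nonneg_right (hν_anti (Finset.mem_Iic.mp hj)) (sq_nonneg _)
    have hD_le : x ⬝ᵥ (Matrix.diagonal lam *ᵥ x) ≤ lam i * (x ⬝ᵥ x) := by
      rw [quad_eval hf_orth hf_eig _ hxf, norm_eval hf_orth _ hxf, Finset.mul_sum]
      refine Finset.sum_le_sum fun j hj => ?_
      exact mul_le_mul_of_nonneg_right (hlam_anti (Finset.mem_Ici.mp hj)) (sq_nonneg _)
    have hcmp := (quad_compare hd hm lam hlam_pos v A hA x).2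
    have hcpos : (0:ℝ) ≤ 1 + (m : ℝ) * (d : ℝ) * c₀ := by positivity
    have hchain : ν i * (x ⬝ᵥ x) ≤ (lam i * (1 + (m : ℝ) * (d : ℝ) * c₀)) * (x ⬝ᵥ x) := by
      calc ν i * (x ⬝ᵥ x) ≤ x ⬝ᵥ (A *ᵥ x) := hA_ge
        _ ≤ (1 + (m : ℝ) * (d : ℝ) * c₀) * (x ⬝ᵥ (Matrix.diagonal lam *ᵥ x)) := hcmp
        _ ≤ (1 + (m : ℝ) * (d : ℝ) * c₀) * (lam i * (x ⬝ᵥ x)) :=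
            mul_le_mul_of_nonneg_left hD_le hcpos
        _ = (lam i * (1 + (m : ℝ) * (d : ℝ) * c₀)) * (x ⬝ᵥ x) := by ring
    exact (mul_le_mul_iff_of_pos_right hxx).mp hchain
end

section
/- Let D = diag(λ₁,…,λ_d) with λ₁ ≥ … ≥ λ_d > 0, let A be a d×d symmetric matrix with A ⪰ D (that is, A − D is positive semidefinite), let ν₁ ≥ … ≥ ν_d be the eigenvalues of A and (e₁,…,e_d) a corresponding orthonormal system of eigenvectors. Suppose there is a constant C ≥ 0 such that |[e_i]_j| ≤ C · √(min(λ_i,λ_j)/max(λ_i,λ_j)) for all i,j. Then for every v ∈ ℝ^d with ‖v‖_∞ ≤ V and every i ∈ {1,…,d}, |⟨√D v, e_i⟩| ≤ d V C · √(ν_i). -/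
open Matrix Finset

/-- If `A ⪰ D = diag(λ)` is symmetric with orthonormal eigenvectors `e` (eigenvalues
`ν` decreasing) satisfying `|[eᵢ]_j| ≤ C √(min(λᵢ,λⱼ)/max(λᵢ,λⱼ))`, then for any `v`
with `‖v‖_∞ ≤ V`, `|⟨√D v, eᵢ⟩| ≤ d V C √νᵢ`. -/
theorem inner_sqrtD_eigenvector_bound
    {d : ℕ}
    (lam : Fin d → ℝ) (hlam_anti : Antitone lam) (hlam_pos : ∀ i, 0 < lam i)
    (A : Matrix (Fin d) (Fin d) ℝ) (hAsymm : A.IsSymm)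
    (hAD : (A - Matrix.diagonal lam).PosSemidef)
    (ν : Fin d → ℝ) (hν_anti : Antitone ν)
    (e : Fin d → Fin d → ℝ)
    (he_orth : ∀ i j, e i ⬝ᵥ e j = if i = j then (1 : ℝ) else 0)
    (he_eig : ∀ i, A.mulVec (e i) = ν i • e i)
    (C : ℝ) (hC : 0 ≤ C)
    (hbound : ∀ i j : Fin d,
      |e i j| ≤ C * Real.sqrt (min (lam i) (lam j) / max (lam i) (lam j)))
    (V : ℝ) (v : Fin d → ℝ) (hv : ∀ j, |v j| ≤ V) :
    ∀ i : Fin d,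
      |(Matrix.diagonal fun j => Real.sqrt (lam j)).mulVec v ⬝ᵥ e i| ≤
        (d : ℝ) * V * C * Real.sqrt (ν i) := by
  intro i
  have hV : 0 ≤ V := le_trans (abs_nonneg _) (hv i)
  -- Step 1 : `lam i ≤ ν i` (a Weyl-type eigenvalue comparison).
  have key : lam i ≤ ν i := by
    have hnd : (i : ℕ) < d := i.isLt
    set n : ℕ := (i : ℕ) with hn
    let emb1 : Fin (d - n) → Fin d := fun k => ⟨n + k, by omega⟩
    let emb2 : Fin (d - n - 1) → Fin d := fun j => ⟨n + 1 + j, by omega⟩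
    have hemb1inj : Function.Injective emb1 := by
      intro a b hab
      have := congrArg (Fin.val) hab
      simp only [emb1] at this
      exact Fin.ext (by omega)
    let M : Matrix (Fin (d - n - 1)) (Fin (d - n)) ℝ :=
      Matrix.of fun j k => e (emb1 k) (emb2 j)
    obtain ⟨c, hc0, hMc⟩ : ∃ c : Fin (d - n) → ℝ, c ≠ 0 ∧ M.mulVec c = 0 := by
      by_contra h
      push_neg at h
      have hinj : Function.Injective M.mulVecLin := by
        rw [← LinearMap.ker_eq_bot, LinearMap.ker_eq_bot']
        intro c hc
        by_contra hne
        exact h c hne (by simpa [Matrix.mulVecLin_apply] using hc)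
      have hle := LinearMap.finrank_le_finrank_of_injective hinj
      simp only [Module.finrank_pi, Fintype.card_fin] at hle
      omega
    -- the test vector
    set x : Fin d → ℝ := fun j => ∑ k, c k * e (emb1 k) j with hx
    have hx0 : ∀ j : Fin d, n < (j : ℕ) → x j = 0 := by
      intro j hj
      have hj' : emb2 ⟨(j : ℕ) - n - 1, by omega⟩ = j := by
        apply Fin.ext
        simp only [emb2]
        omega
      have := congrFun hMc ⟨(j : ℕ) - n - 1, by omega⟩
      simp only [Matrix.mulVec, dotProduct, M, Matrix.of_apply, hj', Pi.zero_apply] at this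
      rw [hx]
      rw [← this]
      exact Finset.sum_congr rfl fun k _ => mul_comm _ _
    have horth' : ∀ k l : Fin (d - n), e (emb1 k) ⬝ᵥ e (emb1 l) =
        if k = l then (1 : ℝ) else 0 := by
      intro k l
      rw [he_orth]
      simp [hemb1inj.eq_iff]
    have hxe : ∀ l : Fin (d - n), x ⬝ᵥ e (emb1 l) = c l := by
      intro l
      have : x ⬝ᵥ e (emb1 l) = ∑ k, c k * (e (emb1 k) ⬝ᵥ e (emb1 l)) := by
        simp only [dotProduct, hx, Finset.sum_mul, Finset.mul_sum]
        rw [Finset.sum_comm]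
        exact Finset.sum_congr rfl fun k _ => Finset.sum_congr rfl fun j _ => by ring
      rw [this]
      simp [horth']
    have hxx : x ⬝ᵥ x = ∑ l, c l * c l := by
      have : x ⬝ᵥ x = ∑ l, c l * (x ⬝ᵥ e (emb1 l)) := by
        simp only [dotProduct, hx, Finset.mul_sum]
        rw [Finset.sum_comm]
        refine Finset.sum_congr rfl fun l _ => ?_
        exact Finset.sum_congr rfl fun j _ => by ring
      rw [this]
      exact Finset.sum_congr rfl fun l _ => by rw [hxe]
    have hxsum : x = ∑ l, c l • e (emb1 l) := by
      funext j
      rw [hx]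
      simp [Finset.sum_apply]
    have hdsum : ∀ w : Fin (d - n) → Fin d → ℝ, x ⬝ᵥ (∑ l, w l) = ∑ l, x ⬝ᵥ w l := by
      intro w
      simp only [dotProduct, Finset.sum_apply, Finset.mul_sum]
      exact Finset.sum_comm
    have hAx : x ⬝ᵥ A.mulVec x = ∑ l, ν (emb1 l) * (c l * c l) := by
      have hAxv : A.mulVec x = ∑ l, (c l * ν (emb1 l)) • e (emb1 l) := by
        have h0 : A.mulVec x = A.mulVecLin x := rfl
        rw [h0, hxsum, map_sum]
        refine Finset.sum_congr rfl fun l _ => ?_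
        rw [LinearMap.map_smul, Matrix.mulVecLin_apply, he_eig, smul_smul]
      rw [hAxv, hdsum]
      refine Finset.sum_congr rfl fun l _ => ?_
      rw [dotProduct_smul, hxe]
      simp only [smul_eq_mul]; ring
    have hc2pos : 0 < ∑ l, c l * c l := by
      obtain ⟨l, hl⟩ := Function.ne_iff.mp hc0
      have hl' : c l ≠ 0 := by simpa using hl
      exact Finset.sum_pos' (fun l _ => mul_self_nonneg _)
        ⟨l, Finset.mem_univ l, mul_self_pos.mpr hl'⟩
    have hA_le : x ⬝ᵥ A.mulVec x ≤ ν i * ∑ l, c l * c l := by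
      rw [hAx, Finset.mul_sum]
      refine Finset.sum_le_sum fun l _ => ?_
      have hile : i ≤ emb1 l := by
        rw [Fin.le_def]
        simp only [emb1]
        omega
      exact mul_le_mul_of_nonneg_right (hν_anti hile) (mul_self_nonneg _)
    have hD_ge : lam i * (∑ l, c l * c l) ≤ x ⬝ᵥ (Matrix.diagonal lam).mulVec x := by
      have hDx : x ⬝ᵥ (Matrix.diagonal lam).mulVec x = ∑ j, lam j * (x j * x j) := by
        simp only [dotProduct, Matrix.mulVec_diagonal]
        exact Finset.sum_congr rfl fun j _ => by ring
      have hxx' : (∑ l, c l * c l) = ∑ j, x j * x j := by rw [← hxx]; rfl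
      rw [hDx, hxx', Finset.mul_sum]
      refine Finset.sum_le_sum fun j _ => ?_
      rcases le_or_gt (j : ℕ) n with hj | hj
      · have : j ≤ i := by rw [Fin.le_def]; omega
        exact mul_le_mul_of_nonneg_right (hlam_anti this) (mul_self_nonneg _)
      · rw [hx0 j hj]; ring_nf; exact le_refl _
    have hPSD : x ⬝ᵥ (Matrix.diagonal lam).mulVec x ≤ x ⬝ᵥ A.mulVec x := by
      have h2 := hAD.dotProduct_mulVec_nonneg x
      simp only [Matrix.sub_mulVec, dotProduct_sub, star_trivial] at h2
      linarith
    have hfin : lam i * (∑ l, c l * c l) ≤ ν i * (∑ l, c l * c l) := by linarith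
    nlinarith [hfin, hc2pos]
  have hν0 : 0 ≤ ν i := le_trans (hlam_pos i).le key
  -- Step 2 : the per-coordinate bound.
  have hterm : ∀ j : Fin d,
      |Real.sqrt (lam j) * v j * e i j| ≤ V * C * Real.sqrt (ν i) := by
    intro j
    have hsl : (0:ℝ) ≤ Real.sqrt (lam j) := Real.sqrt_nonneg _
    have h1 : |Real.sqrt (lam j) * v j * e i j|
        = Real.sqrt (lam j) * (|v j| * |e i j|) := by
      rw [abs_mul, abs_mul, abs_of_nonneg hsl, mul_assoc]
    rw [h1]
    have h2 : |v j| * |e i j| ≤ V * (C * Real.sqrt (min (lam i) (lam j) / max (lam i) (lam j))) :=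
      mul_le_mul (hv j) (hbound i j) (abs_nonneg _) hV
    have h3 : Real.sqrt (lam j) * (V * (C * Real.sqrt (min (lam i) (lam j) / max (lam i) (lam j))))
        ≤ V * C * Real.sqrt (ν i) := by
      have hmm : min (lam i) (lam j) / max (lam i) (lam j) ≤ lam i / lam j :=
        div_le_div₀ (hlam_pos i).le (min_le_left _ _) (hlam_pos j) (le_max_right _ _)
      have hmm0 : 0 ≤ min (lam i) (lam j) / max (lam i) (lam j) :=
        div_nonneg (le_min (hlam_pos i).le (hlam_pos j).le)
          (le_max_of_le_left (hlam_pos i).le)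
      have hprod : Real.sqrt (lam j) * Real.sqrt (min (lam i) (lam j) / max (lam i) (lam j))
          ≤ Real.sqrt (ν i) := by
        rw [← Real.sqrt_mul (hlam_pos j).le]
        apply Real.sqrt_le_sqrt
        calc lam j * (min (lam i) (lam j) / max (lam i) (lam j))
            ≤ lam j * (lam i / lam j) :=
              mul_le_mul_of_nonneg_left hmm (hlam_pos j).le
          _ = lam i := by rw [mul_comm]; exact div_mul_cancel₀ _ (hlam_pos j).ne'
          _ ≤ ν i := key
      calc Real.sqrt (lam j) * (V * (C * Real.sqrt (min (lam i) (lam j) / max (lam i) (lam j))))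
          = (V * C) * (Real.sqrt (lam j) * Real.sqrt (min (lam i) (lam j) / max (lam i) (lam j))) := by
            ring
        _ ≤ (V * C) * Real.sqrt (ν i) :=
            mul_le_mul_of_nonneg_left hprod (by positivity)
        _ = V * C * Real.sqrt (ν i) := rfl
    calc Real.sqrt (lam j) * (|v j| * |e i j|)
        ≤ Real.sqrt (lam j) * (V * (C * Real.sqrt (min (lam i) (lam j) / max (lam i) (lam j)))) :=
          mul_le_mul_of_nonneg_left h2 hsl
      _ ≤ V * C * Real.sqrt (ν i) := h3
  have hdot : (Matrix.diagonal fun j => Real.sqrt (lam j)).mulVec v ⬝ᵥ e i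
      = ∑ j, Real.sqrt (lam j) * v j * e i j := by
    simp only [dotProduct, Matrix.mulVec_diagonal]
  rw [hdot]
  calc |∑ j, Real.sqrt (lam j) * v j * e i j|
      ≤ ∑ j, |Real.sqrt (lam j) * v j * e i j| := Finset.abs_sum_le_sum_abs _ _
    _ ≤ ∑ _j : Fin d, V * C * Real.sqrt (ν i) := Finset.sum_le_sum fun j _ => hterm j
    _ = (d : ℝ) * V * C * Real.sqrt (ν i) := by
        rw [Finset.sum_const, Finset.card_univ, Fintype.card_fin, nsmul_eq_mul]
        ring
end

section
/- Let D = diag(λ₁,…,λ_d) with λ₁ ≥ … ≥ λ_d > 0, let V ≥ 1/√d, and let v^{(1)},…,v^{(m+1)} ∈ ℝ^d with ‖v^{(k)}‖_∞ ≤ V for all k. Set A^{(m)} = D + √D (Σ_{k=1}^m v^{(k)}(v^{(k)})ᵀ) √D and A^{(m+1)} = A^{(m)} + √D v^{(m+1)}(v^{(m+1)})ᵀ √D. Let (e₁^{(m)},…,e_d^{(m)}) and (e₁^{(m+1)},…,e_d^{(m+1)}) be orthonormal systems of eigenvectors of A^{(m)} and A^{(m+1)} respectively, ordered by decreasing eigenvalues.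 Suppose there is C_m ≥ 1 such that |[e_i^{(m)}]_j| ≤ C_m √(min(λ_i,λ_j)/max(λ_i,λ_j)) for all i,j. Then |⟨e_i^{(m+1)}, e_k^{(m)}⟩| ≤ 5 d⁶ V⁴ C_m⁴ · √(1 + d m V²) · √(min(λ_i,λ_k)/max(λ_i,λ_k)) for all i,k ∈ {1,…,d}. -/
open Matrix Finset

/- ## Auxiliary lemmas -/

lemma onb_expansion {d : ℕ} (e : Fin d → Fin d → ℝ)
    (he : ∀ i j, e i ⬝ᵥ e j = if i = j then (1:ℝ) else 0) (x : Fin d → ℝ) :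
    x = ∑ j, (x ⬝ᵥ e j) • e j := by
  let e' : Fin d → EuclideanSpace ℝ (Fin d) := fun i => WithLp.toLp 2 (e i)
  have hon : Orthonormal ℝ e' := by
    rw [orthonormal_iff_ite]
    intro i j
    simpa [e', PiLp.inner_apply, RCLike.inner_apply, dotProduct, mul_comm] using he i j
  have hsp : ⊤ ≤ Submodule.span ℝ (Set.range e') :=
    (hon.linearIndependent.span_eq_top_of_card_eq_finrank' (by simp)).ge
  let b : OrthonormalBasis (Fin d) ℝ (EuclideanSpace ℝ (Fin d)) := OrthonormalBasis.mk hon hsp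
  have hx := b.sum_repr' (WithLp.toLp 2 x : EuclideanSpace ℝ (Fin d))
  have hb : ∀ i, b i = e' i := fun i => congrFun (OrthonormalBasis.coe_mk hon hsp) i
  calc x = WithLp.ofLp (∑ i, (inner ℝ (b i) (WithLp.toLp 2 x : EuclideanSpace ℝ (Fin d)) : ℝ) • b i) := by rw [hx]
    _ = ∑ j, (x ⬝ᵥ e j) • e j := by
        rw [WithLp.ofLp_sum]
        refine Finset.sum_congr rfl fun j _ => ?_
        rw [WithLp.ofLp_smul, hb]
        congr 1

lemma dot_sum {d n : ℕ} (x : Fin d → ℝ) (f : Fin n → Fin d → ℝ) :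
    x ⬝ᵥ (∑ j, f j) = ∑ j, x ⬝ᵥ f j := by
  simp only [dotProduct, Finset.sum_apply, Finset.mul_sum]
  exact Finset.sum_comm

lemma dot_self_eq {d : ℕ} (e : Fin d → Fin d → ℝ)
    (he : ∀ i j, e i ⬝ᵥ e j = if i = j then (1:ℝ) else 0) (x : Fin d → ℝ) :
    x ⬝ᵥ x = ∑ j, (x ⬝ᵥ e j)^2 := by
  nth_rw 2 [onb_expansion e he x]
  rw [dot_sum]
  refine Finset.sum_congr rfl fun j _ => ?_
  rw [dotProduct_smul]
  simp [sq]

lemma quad_eq {d : ℕ} (M : Matrix (Fin d) (Fin d) ℝ) (μ : Fin d → ℝ)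
    (e : Fin d → Fin d → ℝ)
    (he : ∀ i j, e i ⬝ᵥ e j = if i = j then (1:ℝ) else 0)
    (heig : ∀ i, M.mulVec (e i) = μ i • e i) (x : Fin d → ℝ) :
    x ⬝ᵥ M.mulVec x = ∑ j, μ j * (x ⬝ᵥ e j)^2 := by
  nth_rw 2 [onb_expansion e he x]
  have h1 : M.mulVec (∑ j, (x ⬝ᵥ e j) • e j) = ∑ j, (x ⬝ᵥ e j) • ((μ j) • e j) := by
    rw [show M.mulVec (∑ j, (x ⬝ᵥ e j) • e j) = M.mulVecLin (∑ j, (x ⬝ᵥ e j) • e j) from rfl,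
      map_sum]
    refine Finset.sum_congr rfl fun j _ => ?_
    rw [LinearMap.map_smul, Matrix.mulVecLin_apply, heig]
  rw [h1, dot_sum]
  refine Finset.sum_congr rfl fun j _ => ?_
  rw [smul_smul, dotProduct_smul]
  simp [sq]; ring

lemma orth_li {d : ℕ} (e : Fin d → Fin d → ℝ)
    (he : ∀ i j, e i ⬝ᵥ e j = if i = j then (1:ℝ) else 0) :
    LinearIndependent ℝ e := by
  let e' : Fin d → EuclideanSpace ℝ (Fin d) := fun i => WithLp.toLp 2 (e i)
  have hon : Orthonormal ℝ e' := by
    rw [orthonormal_iff_ite]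
    intro i j
    simpa [e', PiLp.inner_apply, RCLike.inner_apply, dotProduct, mul_comm] using he i j
  exact hon.linearIndependent.map' (WithLp.linearEquiv 2 ℝ (Fin d → ℝ)).toLinearMap (LinearEquiv.ker _)

lemma span_orth {d n : ℕ} (g : Fin n → Fin d → ℝ) (x : Fin d → ℝ)
    (hx : x ∈ Submodule.span ℝ (Set.range g)) (y : Fin d → ℝ)
    (hy : ∀ a, g a ⬝ᵥ y = 0) : x ⬝ᵥ y = 0 := by
  induction hx using Submodule.span_induction with
  | mem z hz => obtain ⟨a, rfl⟩ := hz; exact hy a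
  | zero => simp
  | add a b _ _ ha hb => rw [add_dotProduct, ha, hb, add_zero]
  | smul c a _ ha => rw [smul_dotProduct, ha, smul_zero]

/-- Comparison of ordered eigenvalues via the Courant–Fischer dimension argument. -/
lemma eig_compare {d : ℕ} (A B : Matrix (Fin d) (Fin d) ℝ)
    (μ ξ : Fin d → ℝ) (hμ : Antitone μ) (hξ : Antitone ξ)
    (e f : Fin d → Fin d → ℝ)
    (he : ∀ i j, e i ⬝ᵥ e j = if i = j then (1:ℝ) else 0)
    (hf : ∀ i j, f i ⬝ᵥ f j = if i = j then (1:ℝ) else 0)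
    (heA : ∀ i, A.mulVec (e i) = μ i • e i)
    (hfB : ∀ i, B.mulVec (f i) = ξ i • f i)
    (hAB : ∀ x, x ⬝ᵥ A.mulVec x ≤ x ⬝ᵥ B.mulVec x) (k : Fin d) :
    μ k ≤ ξ k := by
  have hkd : (k : ℕ) + 1 ≤ d := k.2
  let g1 : Fin ((k : ℕ) + 1) → Fin d → ℝ := fun a => e (a.castLE hkd)
  let g2 : Fin (d - (k : ℕ)) → Fin d → ℝ := fun a => f ⟨(k : ℕ) + a, by omega⟩
  have hg1inj : Function.Injective (fun a : Fin ((k : ℕ) + 1) => a.castLE hkd) :=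
    fun a b hab => by simpa [Fin.ext_iff] using hab
  have hg2inj : Function.Injective
      (fun a : Fin (d - (k : ℕ)) => (⟨(k : ℕ) + a, by omega⟩ : Fin d)) :=
    fun a b hab => by simpa [Fin.ext_iff] using hab
  have hli1 : LinearIndependent ℝ g1 := (orth_li e he).comp _ hg1inj
  have hli2 : LinearIndependent ℝ g2 := (orth_li f hf).comp _ hg2inj
  set S := Submodule.span ℝ (Set.range g1) with hS
  set T := Submodule.span ℝ (Set.range g2) with hT
  have hdS : Module.finrank ℝ S = (k : ℕ) + 1 := by
    rw [finrank_span_eq_card hli1, Fintype.card_fin]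
  have hdT : Module.finrank ℝ T = d - (k : ℕ) := by
    rw [finrank_span_eq_card hli2, Fintype.card_fin]
  have hsup : Module.finrank ℝ ↥(S ⊔ T) ≤ d := by
    have := Submodule.finrank_le (S ⊔ T)
    rwa [Module.finrank_fintype_fun_eq_card, Fintype.card_fin] at this
  have hinf : 0 < Module.finrank ℝ ↥(S ⊓ T) := by
    have := Submodule.finrank_sup_add_finrank_inf_eq S T
    omega
  have hne : S ⊓ T ≠ ⊥ := by
    intro hbot
    rw [hbot, finrank_bot] at hinf
    exact lt_irrefl 0 hinf
  obtain ⟨x, hxST, hx0⟩ := Submodule.exists_mem_ne_zero_of_ne_bot hne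
  have hxS : x ∈ S := hxST.1
  have hxT : x ∈ T := hxST.2
  have hc1 : ∀ j : Fin d, k < j → x ⬝ᵥ e j = 0 := by
    intro j hj
    refine span_orth g1 x hxS (e j) fun a => ?_
    have : (a.castLE hkd) ≠ j := by
      intro hh; rw [← hh] at hj
      exact absurd hj (by simp [Fin.lt_def]; omega)
    simpa [g1, this] using he (a.castLE hkd) j
  have hc2 : ∀ j : Fin d, j < k → x ⬝ᵥ f j = 0 := by
    intro j hj
    refine span_orth g2 x hxT (f j) fun a => ?_
    have : (⟨(k : ℕ) + a, by omega⟩ : Fin d) ≠ j := by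
      intro hh
      have := congrArg Fin.val hh
      simp at this
      rw [Fin.lt_def] at hj; omega
    show f _ ⬝ᵥ f j = 0
    rw [hf, if_neg this]
  have hxx : 0 < x ⬝ᵥ x := by
    rcases (dotProduct_self_eq_zero (v := x)).not.mpr hx0 with h
    have hnn : 0 ≤ x ⬝ᵥ x := Finset.sum_nonneg fun i _ => mul_self_nonneg _
    cases hnn.lt_or_eq with
    | inl h1 => exact h1
    | inr h1 => exact absurd h1.symm h
  have hA : μ k * (x ⬝ᵥ x) ≤ x ⬝ᵥ A.mulVec x := by
    rw [quad_eq A μ e he heA x, dot_self_eq e he x, Finset.mul_sum]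
    refine Finset.sum_le_sum fun j _ => ?_
    by_cases hj : j ≤ k
    · exact mul_le_mul_of_nonneg_right (hμ hj) (sq_nonneg _)
    · rw [hc1 j (lt_of_not_ge hj)]; simp
  have hB : x ⬝ᵥ B.mulVec x ≤ ξ k * (x ⬝ᵥ x) := by
    rw [quad_eq B ξ f hf hfB x, dot_self_eq f hf x, Finset.mul_sum]
    refine Finset.sum_le_sum fun j _ => ?_
    by_cases hj : k ≤ j
    · exact mul_le_mul_of_nonneg_right (hξ hj) (sq_nonneg _)
    · rw [hc2 j (lt_of_not_ge hj)]; simp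
  have := (hA.trans (hAB x)).trans hB
  exact le_of_mul_le_mul_right (by linarith) hxx

lemma rank1_mulVec {d : ℕ} (sq u y : Fin d → ℝ) :
    (Matrix.diagonal sq * Matrix.vecMulVec u u * Matrix.diagonal sq).mulVec y
      = (∑ j, sq j * y j * u j) • (fun i => sq i * u i) := by
  funext i
  rw [← Matrix.mulVec_mulVec, ← Matrix.mulVec_mulVec]
  have hd : Matrix.diagonal sq *ᵥ y = fun j => sq j * y j :=
    funext fun j => Matrix.mulVec_diagonal sq y j
  rw [hd]
  simp only [Matrix.mulVec_diagonal]
  have : (Matrix.vecMulVec u u).mulVec (fun j => sq j * y j)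
      = fun i => u i * ∑ j, u j * (sq j * y j) := by
    funext i
    simp [Matrix.mulVec, dotProduct, Matrix.vecMulVec_apply, Finset.mul_sum, mul_assoc]
  rw [this]
  simp only [Pi.smul_apply, smul_eq_mul]
  rw [Finset.sum_congr rfl (fun j _ => by ring : ∀ j ∈ univ, sq j * y j * u j = u j * (sq j * y j))]
  ring

lemma bilin_rank1 {d : ℕ} (sq u x y : Fin d → ℝ) :
    x ⬝ᵥ (Matrix.diagonal sq * Matrix.vecMulVec u u * Matrix.diagonal sq).mulVec y
      = (∑ j, sq j * x j * u j) * (∑ j, sq j * y j * u j) := by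
  rw [rank1_mulVec, dotProduct_smul]
  have : x ⬝ᵥ (fun i => sq i * u i) = ∑ j, sq j * x j * u j := by
    simp [dotProduct]; exact Finset.sum_congr rfl fun j _ => by ring
  rw [smul_eq_mul, this]; ring

lemma bilin_diag {d : ℕ} (lam x y : Fin d → ℝ) :
    x ⬝ᵥ (Matrix.diagonal lam).mulVec y = ∑ j, lam j * x j * y j := by
  simp [dotProduct, Matrix.mulVec_diagonal]
  exact Finset.sum_congr rfl fun j _ => by ring

lemma sum_mulVec'_s14 {d n : ℕ} (M : Fin n → Matrix (Fin d) (Fin d) ℝ) (y : Fin d → ℝ) :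
    (∑ k, M k).mulVec y = ∑ k, (M k).mulVec y := by
  funext i
  simp only [Matrix.mulVec, dotProduct, Matrix.sum_apply, Finset.sum_apply, Finset.sum_mul]
  exact Finset.sum_comm

lemma bilin_sum {d n : ℕ} (lam : Fin d → ℝ) (vv : Fin n → Fin d → ℝ) (x y : Fin d → ℝ) :
    x ⬝ᵥ (Matrix.diagonal lam +
      (Matrix.diagonal fun i => Real.sqrt (lam i)) *
        (∑ k, Matrix.vecMulVec (vv k) (vv k)) *
      (Matrix.diagonal fun i => Real.sqrt (lam i))).mulVec y
    = (∑ j, lam j * x j * y j) +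
      ∑ k, (∑ j, Real.sqrt (lam j) * x j * vv k j) * (∑ j, Real.sqrt (lam j) * y j * vv k j) := by
  rw [Matrix.add_mulVec, dotProduct_add, bilin_diag]
  congr 1
  have h1 : (Matrix.diagonal fun i => Real.sqrt (lam i)) *
        (∑ k, Matrix.vecMulVec (vv k) (vv k)) *
      (Matrix.diagonal fun i => Real.sqrt (lam i))
      = ∑ k, (Matrix.diagonal fun i => Real.sqrt (lam i)) *
        Matrix.vecMulVec (vv k) (vv k) * (Matrix.diagonal fun i => Real.sqrt (lam i)) := by
    rw [Matrix.mul_sum, Matrix.sum_mul]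
  rw [h1, sum_mulVec'_s14, dot_sum]
  exact Finset.sum_congr rfl fun k _ => bilin_rank1 _ _ _ _

lemma sqrt_le_self' {a : ℝ} (h : 1 ≤ a) : Real.sqrt a ≤ a := by
  have := Real.sqrt_le_sqrt (show a ≤ a^2 by nlinarith)
  rwa [Real.sqrt_sq (by linarith)] at this

lemma key_sqrt {a b : ℝ} (ha : 0 < a) (hb : 0 < b) :
    Real.sqrt b * Real.sqrt (min a b / max a b) ≤ Real.sqrt a := by
  rw [← Real.sqrt_mul hb.le]
  apply Real.sqrt_le_sqrt
  rcases le_total a b with h | h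
  · rw [min_eq_left h, max_eq_right h, mul_comm, div_mul_cancel₀ a (ne_of_gt hb)]
  · rw [min_eq_right h, max_eq_left h, ← mul_div_assoc, div_le_iff₀ ha]
    nlinarith
set_option maxHeartbeats 4000000 in
/-- **Induction step of Theorem 2:** if the eigenvectors of
`A⁽ᵐ⁾ = D + √D (∑_{k<m} v⁽ᵏ⁾(v⁽ᵏ⁾)ᵀ) √D` satisfy
`|[eᵢ⁽ᵐ⁾]_j| ≤ Cₘ √(min(λᵢ,λⱼ)/max(λᵢ,λⱼ))`, then the eigenvectors of
`A⁽ᵐ⁺¹⁾ = A⁽ᵐ⁾ + √D v⁽ᵐ⁺¹⁾(v⁽ᵐ⁺¹⁾)ᵀ √D` satisfy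
`|⟨eᵢ⁽ᵐ⁺¹⁾, eₖ⁽ᵐ⁾⟩| ≤ 5 d⁶ V⁴ Cₘ⁴ √(1 + d m V²) √(min(λᵢ,λₖ)/max(λᵢ,λₖ))`. -/
theorem eigenvector_bound_induction_step
    {d m : ℕ} (hd : 0 < d)
    (lam : Fin d → ℝ) (hlam_anti : Antitone lam) (hlam_pos : ∀ i, 0 < lam i)
    (V : ℝ) (hV : 1 / Real.sqrt d ≤ V)
    (v : Fin (m + 1) → Fin d → ℝ) (hv : ∀ k j, |v k j| ≤ V)
    (Am Am1 : Matrix (Fin d) (Fin d) ℝ)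
    (hAm : Am = Matrix.diagonal lam +
      (Matrix.diagonal fun i => Real.sqrt (lam i)) *
        (∑ k : Fin m, Matrix.vecMulVec (v k.castSucc) (v k.castSucc)) *
      (Matrix.diagonal fun i => Real.sqrt (lam i)))
    (hAm1 : Am1 = Am +
      (Matrix.diagonal fun i => Real.sqrt (lam i)) *
        Matrix.vecMulVec (v (Fin.last m)) (v (Fin.last m)) *
      (Matrix.diagonal fun i => Real.sqrt (lam i)))
    (νm νm1 : Fin d → ℝ) (hνm_anti : Antitone νm) (hνm1_anti : Antitone νm1)
    (em em1 : Fin d → Fin d → ℝ)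
    (hem_orth : ∀ i j, em i ⬝ᵥ em j = if i = j then (1 : ℝ) else 0)
    (hem_eig : ∀ i, Am.mulVec (em i) = νm i • em i)
    (hem1_orth : ∀ i j, em1 i ⬝ᵥ em1 j = if i = j then (1 : ℝ) else 0)
    (hem1_eig : ∀ i, Am1.mulVec (em1 i) = νm1 i • em1 i)
    (Cm : ℝ) (hCm : 1 ≤ Cm)
    (hbound : ∀ i j : Fin d,
      |em i j| ≤ Cm * Real.sqrt (min (lam i) (lam j) / max (lam i) (lam j))) :
    ∀ i k : Fin d,
      |em1 i ⬝ᵥ em k| ≤ 5 * (d : ℝ) ^ 6 * V ^ 4 * Cm ^ 4 *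
        Real.sqrt (1 + (d : ℝ) * (m : ℝ) * V ^ 2) *
        Real.sqrt (min (lam i) (lam k) / max (lam i) (lam k)) := by
  -- basic scalar facts
  have hd1 : (1:ℝ) ≤ (d:ℝ) := by exact_mod_cast hd
  have hdpos : (0:ℝ) < (d:ℝ) := by linarith
  have hsd : (0:ℝ) < Real.sqrt d := Real.sqrt_pos.mpr hdpos
  have hVpos : 0 < V := lt_of_lt_of_le (by positivity) hV
  have hsdV : 1 ≤ Real.sqrt d * V := by
    rw [div_le_iff₀ hsd] at hV; linarith
  have hdV2 : 1 ≤ (d:ℝ) * V^2 := by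
    nlinarith [Real.mul_self_sqrt hdpos.le, Real.sqrt_nonneg (d:ℝ)]
  have hdV : 1 ≤ (d:ℝ) * V := by
    have h1 : 1 ≤ Real.sqrt d := by
      rw [Real.one_le_sqrt]; exact hd1
    nlinarith [Real.mul_self_sqrt hdpos.le]
  set G2 : ℝ := 1 + (d:ℝ) * (m:ℝ) * V^2 with hG2def
  set G : ℝ := Real.sqrt G2 with hGdef
  have hmn : (0:ℝ) ≤ (d:ℝ) * (m:ℝ) * V^2 := by positivity
  have hG2one : 1 ≤ G2 := by rw [hG2def]; linarith
  have hG1 : 1 ≤ G := by rw [hGdef, Real.one_le_sqrt]; exact hG2one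
  have hGpos : 0 < G := by linarith
  set K : ℝ := 1 + (d:ℝ) * ((m:ℝ) + 1) * V^2 with hKdef
  have hK1 : 1 ≤ K := by rw [hKdef]; nlinarith
  have hKpos : 0 < K := by linarith
  have hKle : K ≤ 2 * ((d:ℝ) * V^2) * G2 := by
    rw [hKdef, hG2def]
    nlinarith [mul_nonneg (sub_nonneg.mpr hdV2) hmn]
  have hsqK : Real.sqrt K ≤ 2 * ((d:ℝ) * V^2) * G := by
    have h1 : Real.sqrt K ≤ Real.sqrt (2 * ((d:ℝ) * V^2) * G2) := Real.sqrt_le_sqrt hKle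
    rw [Real.sqrt_mul (by positivity)] at h1
    have h3 : Real.sqrt (2 * ((d:ℝ) * V^2)) ≤ 2 * ((d:ℝ) * V^2) :=
      sqrt_le_self' (by nlinarith)
    calc Real.sqrt K ≤ Real.sqrt (2 * ((d:ℝ) * V^2)) * G := h1
      _ ≤ 2 * ((d:ℝ) * V^2) * G := by
          exact mul_le_mul_of_nonneg_right h3 (by positivity)
  -- bilinear form identities
  have hbAm : ∀ x y : Fin d → ℝ, x ⬝ᵥ Am.mulVec y = (∑ j, lam j * x j * y j) +
      ∑ kk : Fin m, (∑ j, Real.sqrt (lam j) * x j * v kk.castSucc j) *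
        (∑ j, Real.sqrt (lam j) * y j * v kk.castSucc j) := by
    intro x y
    rw [hAm]
    exact bilin_sum lam (fun kk => v kk.castSucc) x y
  have hbAm1 : ∀ x y : Fin d → ℝ, x ⬝ᵥ Am1.mulVec y = (∑ j, lam j * x j * y j) +
      ∑ kk : Fin (m+1), (∑ j, Real.sqrt (lam j) * x j * v kk j) *
        (∑ j, Real.sqrt (lam j) * y j * v kk j) := by
    intro x y
    rw [hAm1, Matrix.add_mulVec, dotProduct_add, hbAm, bilin_rank1,
      Fin.sum_univ_castSucc (f := fun kk => (∑ j, Real.sqrt (lam j) * x j * v kk j) *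
        (∑ j, Real.sqrt (lam j) * y j * v kk j))]
    ring
  -- quadratic form bounds
  have hqDnn : ∀ x : Fin d → ℝ, 0 ≤ ∑ j, lam j * x j * x j :=
    fun x => Finset.sum_nonneg fun j _ => by nlinarith [hlam_pos j, sq_nonneg (x j)]
  have hCS : ∀ (x : Fin d → ℝ) (kk : Fin (m+1)),
      (∑ j, Real.sqrt (lam j) * x j * v kk j) * (∑ j, Real.sqrt (lam j) * x j * v kk j)
        ≤ ((d:ℝ) * V^2) * (∑ j, lam j * x j * x j) := by
    intro x kk
    have h1 := Finset.sum_mul_sq_le_sq_mul_sq univ (fun j => Real.sqrt (lam j) * x j)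
      (fun j => v kk j)
    have h2 : ∑ j, (Real.sqrt (lam j) * x j)^2 = ∑ j, lam j * x j * x j :=
      Finset.sum_congr rfl fun j _ => by
        rw [mul_pow, Real.sq_sqrt (hlam_pos j).le]; ring
    have h3 : ∑ j, (v kk j)^2 ≤ (d:ℝ) * V^2 := by
      calc ∑ j, (v kk j)^2 ≤ ∑ _j : Fin d, V^2 := Finset.sum_le_sum fun j _ => by
            have := hv kk j
            nlinarith [abs_nonneg (v kk j), sq_abs (v kk j)]
        _ = (d:ℝ) * V^2 := by rw [Finset.sum_const, Finset.card_univ, Fintype.card_fin,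
              nsmul_eq_mul]
    have h4 : (∑ j, Real.sqrt (lam j) * x j * v kk j)^2
        ≤ (∑ j, lam j * x j * x j) * ((d:ℝ) * V^2) := by
      calc (∑ j, Real.sqrt (lam j) * x j * v kk j)^2
          ≤ (∑ j, (Real.sqrt (lam j) * x j)^2) * (∑ j, (v kk j)^2) := h1
        _ ≤ (∑ j, lam j * x j * x j) * ((d:ℝ) * V^2) := by
            rw [h2]; exact mul_le_mul_of_nonneg_left h3 (hqDnn x)
    calc (∑ j, Real.sqrt (lam j) * x j * v kk j) * (∑ j, Real.sqrt (lam j) * x j * v kk j)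
        = (∑ j, Real.sqrt (lam j) * x j * v kk j)^2 := (sq _).symm
      _ ≤ (∑ j, lam j * x j * x j) * ((d:ℝ) * V^2) := h4
      _ = ((d:ℝ) * V^2) * (∑ j, lam j * x j * x j) := mul_comm _ _
  have hquadAm_ge : ∀ x : Fin d → ℝ, (∑ j, lam j * x j * x j) ≤ x ⬝ᵥ Am.mulVec x := by
    intro x
    rw [hbAm]
    have : 0 ≤ ∑ kk : Fin m, (∑ j, Real.sqrt (lam j) * x j * v kk.castSucc j) *
        (∑ j, Real.sqrt (lam j) * x j * v kk.castSucc j) :=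
      Finset.sum_nonneg fun kk _ => mul_self_nonneg _
    linarith
  have hquadAm1_ge : ∀ x : Fin d → ℝ, (∑ j, lam j * x j * x j) ≤ x ⬝ᵥ Am1.mulVec x := by
    intro x
    rw [hbAm1]
    have : 0 ≤ ∑ kk : Fin (m+1), (∑ j, Real.sqrt (lam j) * x j * v kk j) *
        (∑ j, Real.sqrt (lam j) * x j * v kk j) :=
      Finset.sum_nonneg fun kk _ => mul_self_nonneg _
    linarith
  have hquadAm1_le : ∀ x : Fin d → ℝ, x ⬝ᵥ Am1.mulVec x ≤ K * (∑ j, lam j * x j * x j) := by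
    intro x
    rw [hbAm1]
    have h1 : ∑ kk : Fin (m+1), (∑ j, Real.sqrt (lam j) * x j * v kk j) *
        (∑ j, Real.sqrt (lam j) * x j * v kk j)
        ≤ ((m:ℝ) + 1) * (((d:ℝ) * V^2) * (∑ j, lam j * x j * x j)) := by
      calc _ ≤ ∑ _kk : Fin (m+1), ((d:ℝ) * V^2) * (∑ j, lam j * x j * x j) :=
            Finset.sum_le_sum fun kk _ => hCS x kk
        _ = ((m:ℝ) + 1) * (((d:ℝ) * V^2) * (∑ j, lam j * x j * x j)) := by
            rw [Finset.sum_const, Finset.card_univ, Fintype.card_fin, nsmul_eq_mul]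
            push_cast; ring
    rw [hKdef]; nlinarith [hqDnn x]
  have hquadAm_le : ∀ x : Fin d → ℝ, x ⬝ᵥ Am.mulVec x ≤ K * (∑ j, lam j * x j * x j) := by
    intro x
    have h1 : x ⬝ᵥ Am.mulVec x ≤ x ⬝ᵥ Am1.mulVec x := by
      rw [hbAm, hbAm1,
        Fin.sum_univ_castSucc (f := fun kk => (∑ j, Real.sqrt (lam j) * x j * v kk j) *
          (∑ j, Real.sqrt (lam j) * x j * v kk j))]
      nlinarith [mul_self_nonneg (∑ j, Real.sqrt (lam j) * x j * v (Fin.last m) j)]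
    exact h1.trans (hquadAm1_le x)
  -- standard basis
  have hestd_orth : ∀ a b : Fin d,
      (fun j => (Pi.single a 1 : Fin d → ℝ) j) ⬝ᵥ (Pi.single b 1) = if a = b then (1:ℝ) else 0 := by
    intro a b
    simp [dotProduct, Pi.single_apply]
    by_cases h : a = b <;> simp [h, Finset.sum_ite_eq]
    exact fun hh => h hh.symm
  have hestd_orth' : ∀ a b : Fin d,
      (Pi.single a 1 : Fin d → ℝ) ⬝ᵥ (Pi.single b 1) = if a = b then (1:ℝ) else 0 :=
    hestd_orth
  have hdiag_eig : ∀ (g : Fin d → ℝ) (a : Fin d),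
      (Matrix.diagonal g).mulVec (Pi.single a 1) = g a • (Pi.single a 1 : Fin d → ℝ) := by
    intro g a
    funext i
    rw [Matrix.mulVec_diagonal]
    by_cases h : i = a <;> simp [h, Pi.single_apply]
  have hKlam_anti : Antitone (fun j => K * lam j) := fun a b hab =>
    mul_le_mul_of_nonneg_left (hlam_anti hab) (le_of_lt hKpos)
  have c1 : ∀ a, lam a ≤ νm a := by
    intro a
    refine eig_compare (Matrix.diagonal lam) Am lam νm hlam_anti hνm_anti
      (fun b => Pi.single b 1) em hestd_orth' hem_orth (fun b => hdiag_eig lam b) hem_eig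
      (fun x => ?_) a
    rw [bilin_diag]
    exact hquadAm_ge x
  have c2 : ∀ a, lam a ≤ νm1 a := by
    intro a
    refine eig_compare (Matrix.diagonal lam) Am1 lam νm1 hlam_anti hνm1_anti
      (fun b => Pi.single b 1) em1 hestd_orth' hem1_orth (fun b => hdiag_eig lam b) hem1_eig
      (fun x => ?_) a
    rw [bilin_diag]
    exact hquadAm1_ge x
  have hdiagK : ∀ x : Fin d → ℝ,
      x ⬝ᵥ (Matrix.diagonal (fun j => K * lam j)).mulVec x = K * (∑ j, lam j * x j * x j) := by
    intro x
    rw [bilin_diag, Finset.mul_sum]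
    exact Finset.sum_congr rfl fun j _ => by ring
  have c3 : ∀ a, νm1 a ≤ K * lam a := by
    intro a
    refine eig_compare Am1 (Matrix.diagonal (fun j => K * lam j)) νm1
      (fun j => K * lam j) hνm1_anti hKlam_anti em1 (fun b => Pi.single b 1)
      hem1_orth hestd_orth' hem1_eig (fun b => hdiag_eig _ b) (fun x => ?_) a
    rw [hdiagK]
    exact hquadAm1_le x
  have c4 : ∀ a, νm a ≤ K * lam a := by
    intro a
    refine eig_compare Am (Matrix.diagonal (fun j => K * lam j)) νm
      (fun j => K * lam j) hνm_anti hKlam_anti em (fun b => Pi.single b 1)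
      hem_orth hestd_orth' hem_eig (fun b => hdiag_eig _ b) (fun x => ?_) a
    rw [hdiagK]
    exact hquadAm_le x
  -- the rank-one update identity
  have hstar : ∀ i k : Fin d, (νm1 i - νm k) * (em1 i ⬝ᵥ em k)
      = (∑ j, Real.sqrt (lam j) * em1 i j * v (Fin.last m) j)
        * (∑ j, Real.sqrt (lam j) * em k j * v (Fin.last m) j) := by
    intro i k
    have h2 := hbAm (em1 i) (em k)
    rw [hem_eig k, dotProduct_smul, smul_eq_mul] at h2
    have h1 : em1 i ⬝ᵥ Am1.mulVec (em k) = νm k * (em1 i ⬝ᵥ em k) +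
        (∑ j, Real.sqrt (lam j) * em1 i j * v (Fin.last m) j)
          * (∑ j, Real.sqrt (lam j) * em k j * v (Fin.last m) j) := by
      rw [hbAm1,
        Fin.sum_univ_castSucc (f := fun kk => (∑ j, Real.sqrt (lam j) * em1 i j * v kk j) *
          (∑ j, Real.sqrt (lam j) * em k j * v kk j))]
      linarith [h2]
    have h3 : em1 i ⬝ᵥ Am1.mulVec (em k) = νm1 i * (em1 i ⬝ᵥ em k) := by
      have hsym : em1 i ⬝ᵥ Am1.mulVec (em k) = em k ⬝ᵥ Am1.mulVec (em1 i) := by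
        rw [hbAm1, hbAm1]
        congr 1
        · exact Finset.sum_congr rfl fun j _ => by ring
        · exact Finset.sum_congr rfl fun kk _ => by ring
      rw [hsym, hem1_eig i, dotProduct_smul, smul_eq_mul, dotProduct_comm]
    rw [h1] at h3
    linarith [h3]
  -- bound on ⟨w, em k⟩
  have hF3 : ∀ k : Fin d, |∑ j, Real.sqrt (lam j) * em k j * v (Fin.last m) j|
      ≤ (d:ℝ) * V * Cm * Real.sqrt (lam k) := by
    intro k
    calc |∑ j, Real.sqrt (lam j) * em k j * v (Fin.last m) j|
        ≤ ∑ j, |Real.sqrt (lam j) * em k j * v (Fin.last m) j| :=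
          Finset.abs_sum_le_sum_abs _ _
      _ ≤ ∑ _j : Fin d, V * Cm * Real.sqrt (lam k) := by
          refine Finset.sum_le_sum fun j _ => ?_
          rw [abs_mul, abs_mul, abs_of_nonneg (Real.sqrt_nonneg _)]
          have hb1 : |em k j| ≤ Cm * Real.sqrt (min (lam k) (lam j) / max (lam k) (lam j)) :=
            hbound k j
          have hb2 : |v (Fin.last m) j| ≤ V := hv _ j
          have key : Real.sqrt (lam j) * Real.sqrt (min (lam k) (lam j) / max (lam k) (lam j))
              ≤ Real.sqrt (lam k) := key_sqrt (hlam_pos k) (hlam_pos j)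
          calc Real.sqrt (lam j) * |em k j| * |v (Fin.last m) j|
              ≤ Real.sqrt (lam j) * (Cm * Real.sqrt (min (lam k) (lam j) / max (lam k) (lam j))) * V := by
                apply mul_le_mul
                · exact mul_le_mul_of_nonneg_left hb1 (Real.sqrt_nonneg _)
                · exact hb2
                · exact abs_nonneg _
                · positivity
            _ = Cm * (Real.sqrt (lam j) * Real.sqrt (min (lam k) (lam j) / max (lam k) (lam j))) * V := by ring
            _ ≤ Cm * Real.sqrt (lam k) * V := by
                apply mul_le_mul_of_nonneg_right _ hVpos.le
                exact mul_le_mul_of_nonneg_left key (by linarith)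
            _ = V * Cm * Real.sqrt (lam k) := by ring
      _ = (d:ℝ) * (V * Cm * Real.sqrt (lam k)) := by
          rw [Finset.sum_const, Finset.card_univ, Fintype.card_fin, nsmul_eq_mul]
      _ = (d:ℝ) * V * Cm * Real.sqrt (lam k) := by ring
  -- bound on ⟨w, em1 i⟩
  have hF4 : ∀ i : Fin d, |∑ j, Real.sqrt (lam j) * em1 i j * v (Fin.last m) j|
      ≤ Real.sqrt K * Real.sqrt (lam i) := by
    intro i
    have h0 : (∑ j, Real.sqrt (lam j) * em1 i j * v (Fin.last m) j)^2 ≤ νm1 i := by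
      have h1 := hbAm1 (em1 i) (em1 i)
      rw [hem1_eig i, dotProduct_smul, smul_eq_mul] at h1
      have h2 : em1 i ⬝ᵥ em1 i = 1 := by rw [hem1_orth i i, if_pos rfl]
      rw [h2, mul_one] at h1
      have h3 : (∑ j, Real.sqrt (lam j) * em1 i j * v (Fin.last m) j) *
          (∑ j, Real.sqrt (lam j) * em1 i j * v (Fin.last m) j)
          ≤ ∑ kk : Fin (m+1), (∑ j, Real.sqrt (lam j) * em1 i j * v kk j) *
            (∑ j, Real.sqrt (lam j) * em1 i j * v kk j) :=
        Finset.single_le_sum (f := fun kk => (∑ j, Real.sqrt (lam j) * em1 i j * v kk j) *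
          (∑ j, Real.sqrt (lam j) * em1 i j * v kk j))
          (fun kk _ => mul_self_nonneg _) (Finset.mem_univ (Fin.last m))
      have h4 := hqDnn (em1 i)
      rw [sq]
      linarith [h1, h3, h4]
    have h5 : (∑ j, Real.sqrt (lam j) * em1 i j * v (Fin.last m) j)^2 ≤ K * lam i :=
      h0.trans (c3 i)
    have := Real.abs_le_sqrt h5
    rwa [Real.sqrt_mul hKpos.le] at this
  -- trivial bound
  have hF6 : ∀ i k : Fin d, |em1 i ⬝ᵥ em k| ≤ 1 := by
    intro i k
    have h1 := Finset.sum_mul_sq_le_sq_mul_sq univ (em1 i) (em k)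
    have h2 : ∑ j, (em1 i j)^2 = 1 := by
      have := hem1_orth i i
      rw [if_pos rfl] at this
      rw [← this]
      exact Finset.sum_congr rfl fun j _ => (sq _)
    have h3 : ∑ j, (em k j)^2 = 1 := by
      have := hem_orth k k
      rw [if_pos rfl] at this
      rw [← this]
      exact Finset.sum_congr rfl fun j _ => (sq _)
    rw [h2, h3, mul_one] at h1
    have h4 : (em1 i ⬝ᵥ em k)^2 ≤ 1 := h1
    rw [abs_le]
    constructor <;> nlinarith [h4]
  clear hAm hAm1 hbAm hbAm1 hquadAm_ge hquadAm1_ge hquadAm1_le hquadAm_le hCS hqDnn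
  clear hestd_orth hestd_orth' hdiag_eig hdiagK hKlam_anti
  clear hem_eig hem1_eig hem_orth hem1_orth hbound hv hlam_anti hνm_anti hνm1_anti
  clear Am Am1
  -- numeric coefficient facts
  have hd3 : (1:ℝ) ≤ (d:ℝ)^3 := one_le_pow₀ hd1
  have hd4V : (1:ℝ) ≤ (d:ℝ)^4 * V := by nlinarith [mul_le_mul hd3 hdV (by norm_num) (by positivity)]
  have hCm3 : (1:ℝ) ≤ Cm^3 := one_le_pow₀ hCm
  have hq : (1:ℝ) ≤ (d:ℝ)^4 * V * Cm^3 := by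
    nlinarith [mul_le_mul hd4V hCm3 (by norm_num) (by positivity)]
  have hPpos : (0:ℝ) < (d:ℝ)^2 * V^3 * Cm := by positivity
  have hcoefcore : 4 * (d:ℝ)^2 * V^3 * Cm ≤ 5 * (d:ℝ)^6 * V^4 * Cm^4 := by
    nlinarith [mul_le_mul_of_nonneg_right hq hPpos.le, hPpos]
  have hcoef : 2 * Real.sqrt K * ((d:ℝ) * V * Cm) ≤ 5 * (d:ℝ)^6 * V^4 * Cm^4 * G := by
    have h1 : 2 * Real.sqrt K * ((d:ℝ) * V * Cm) ≤ 2 * (2 * ((d:ℝ) * V^2) * G) * ((d:ℝ) * V * Cm) := by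
      have : (0:ℝ) ≤ (d:ℝ) * V * Cm := by positivity
      nlinarith [hsqK]
    have h2 : 2 * (2 * ((d:ℝ) * V^2) * G) * ((d:ℝ) * V * Cm) = (4 * (d:ℝ)^2 * V^3 * Cm) * G := by
      ring
    calc 2 * Real.sqrt K * ((d:ℝ) * V * Cm)
        ≤ (4 * (d:ℝ)^2 * V^3 * Cm) * G := by rw [← h2]; exact h1
      _ ≤ (5 * (d:ℝ)^6 * V^4 * Cm^4) * G := mul_le_mul_of_nonneg_right hcoefcore hGpos.le
      _ = 5 * (d:ℝ)^6 * V^4 * Cm^4 * G := by ring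
  -- main case analysis
  intro i k
  have hli := hlam_pos i
  have hlk := hlam_pos k
  have hsli : 0 < Real.sqrt (lam i) := Real.sqrt_pos.mpr hli
  have hslk : 0 < Real.sqrt (lam k) := Real.sqrt_pos.mpr hlk
  by_cases hcA : 2 * K * lam k ≤ lam i
  · -- far case: lam i much larger
    have hlki : lam k ≤ lam i := by nlinarith
    have hmin : min (lam i) (lam k) = lam k := min_eq_right hlki
    have hmax : max (lam i) (lam k) = lam i := max_eq_left hlki
    have hgap : lam i / 2 ≤ νm1 i - νm k := by
      have h1 := c2 i
      have h2 := c4 k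
      nlinarith
    have hgappos : 0 < νm1 i - νm k := lt_of_lt_of_le (by linarith) hgap
    have habs : |em1 i ⬝ᵥ em k| * (lam i / 2)
        ≤ (Real.sqrt K * Real.sqrt (lam i)) * ((d:ℝ) * V * Cm * Real.sqrt (lam k)) := by
      calc |em1 i ⬝ᵥ em k| * (lam i / 2)
          ≤ |em1 i ⬝ᵥ em k| * (νm1 i - νm k) :=
            mul_le_mul_of_nonneg_left hgap (abs_nonneg _)
        _ = |(νm1 i - νm k) * (em1 i ⬝ᵥ em k)| := by
            rw [abs_mul, abs_of_pos hgappos]; ring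
        _ = |∑ j, Real.sqrt (lam j) * em1 i j * v (Fin.last m) j|
            * |∑ j, Real.sqrt (lam j) * em k j * v (Fin.last m) j| := by
            rw [hstar i k, abs_mul]
        _ ≤ _ := mul_le_mul (hF4 i) (hF3 k) (abs_nonneg _) (by positivity)
    rw [hmin, hmax, Real.sqrt_div hlk.le, ← mul_div_assoc, le_div_iff₀ hsli]
    have hss : Real.sqrt (lam i) * Real.sqrt (lam i) = lam i := Real.mul_self_sqrt hli.le
    have h9 : |em1 i ⬝ᵥ em k| * Real.sqrt (lam i)
        ≤ 2 * Real.sqrt K * ((d:ℝ) * V * Cm) * Real.sqrt (lam k) := by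
      refine le_of_mul_le_mul_right ?_ hsli
      calc |em1 i ⬝ᵥ em k| * Real.sqrt (lam i) * Real.sqrt (lam i)
          = |em1 i ⬝ᵥ em k| * lam i := by rw [mul_assoc, hss]
        _ ≤ 2 * Real.sqrt K * ((d:ℝ) * V * Cm) * Real.sqrt (lam k) * Real.sqrt (lam i) := by
            linarith [habs]
    calc |em1 i ⬝ᵥ em k| * Real.sqrt (lam i)
        ≤ 2 * Real.sqrt K * ((d:ℝ) * V * Cm) * Real.sqrt (lam k) := h9
      _ ≤ 5 * (d:ℝ)^6 * V^4 * Cm^4 * G * Real.sqrt (lam k) :=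
          mul_le_mul_of_nonneg_right hcoef (Real.sqrt_nonneg _)
  · by_cases hcB : 2 * K * lam i ≤ lam k
    · -- far case: lam k much larger
      have hlik : lam i ≤ lam k := by nlinarith
      have hmin : min (lam i) (lam k) = lam i := min_eq_left hlik
      have hmax : max (lam i) (lam k) = lam k := max_eq_right hlik
      have hgap : lam k / 2 ≤ νm k - νm1 i := by
        have h1 := c1 k
        have h2 := c3 i
        nlinarith
      have hgappos : 0 < νm k - νm1 i := lt_of_lt_of_le (by linarith) hgap
      have habs : |em1 i ⬝ᵥ em k| * (lam k / 2)
          ≤ (Real.sqrt K * Real.sqrt (lam i)) * ((d:ℝ) * V * Cm * Real.sqrt (lam k)) := by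
        calc |em1 i ⬝ᵥ em k| * (lam k / 2)
            ≤ |em1 i ⬝ᵥ em k| * (νm k - νm1 i) :=
              mul_le_mul_of_nonneg_left hgap (abs_nonneg _)
          _ = |(νm1 i - νm k) * (em1 i ⬝ᵥ em k)| := by
              rw [abs_mul, abs_sub_comm, abs_of_pos hgappos]; ring
          _ = |∑ j, Real.sqrt (lam j) * em1 i j * v (Fin.last m) j|
              * |∑ j, Real.sqrt (lam j) * em k j * v (Fin.last m) j| := by
              rw [hstar i k, abs_mul]
          _ ≤ _ := mul_le_mul (hF4 i) (hF3 k) (abs_nonneg _) (by positivity)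
      rw [hmin, hmax, Real.sqrt_div hli.le, ← mul_div_assoc, le_div_iff₀ hslk]
      have hss : Real.sqrt (lam k) * Real.sqrt (lam k) = lam k := Real.mul_self_sqrt hlk.le
      have h9 : |em1 i ⬝ᵥ em k| * Real.sqrt (lam k)
          ≤ 2 * Real.sqrt K * ((d:ℝ) * V * Cm) * Real.sqrt (lam i) := by
        refine le_of_mul_le_mul_right ?_ hslk
        calc |em1 i ⬝ᵥ em k| * Real.sqrt (lam k) * Real.sqrt (lam k)
            = |em1 i ⬝ᵥ em k| * lam k := by rw [mul_assoc, hss]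
          _ ≤ 2 * Real.sqrt K * ((d:ℝ) * V * Cm) * Real.sqrt (lam i) * Real.sqrt (lam k) := by
              linarith [habs]
      calc |em1 i ⬝ᵥ em k| * Real.sqrt (lam k)
          ≤ 2 * Real.sqrt K * ((d:ℝ) * V * Cm) * Real.sqrt (lam i) := h9
        _ ≤ 5 * (d:ℝ)^6 * V^4 * Cm^4 * G * Real.sqrt (lam i) :=
            mul_le_mul_of_nonneg_right hcoef (Real.sqrt_nonneg _)
    · -- comparable case: trivial bound suffices
      push_neg at hcA hcB
      have hminpos : 0 < min (lam i) (lam k) := lt_min hli hlk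
      have hmaxpos : 0 < max (lam i) (lam k) := lt_of_lt_of_le hli (le_max_left _ _)
      have hmaxmin : max (lam i) (lam k) ≤ 2 * K * min (lam i) (lam k) := by
        rcases le_total (lam i) (lam k) with h | h
        · rw [max_eq_right h, min_eq_left h]; linarith
        · rw [max_eq_left h, min_eq_right h]; linarith
      have h1 : 1 / (2 * K) ≤ min (lam i) (lam k) / max (lam i) (lam k) := by
        rw [div_le_div_iff₀ (by linarith) hmaxpos, one_mul]
        linarith [hmaxmin]
      have hs2K : Real.sqrt (2 * K) ≤ 2 * ((d:ℝ) * V^2) * G := by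
        have hG2sq : G^2 = G2 := Real.sq_sqrt (by linarith)
        have hstep : (d:ℝ) * V^2 * G2 ≤ ((d:ℝ) * V^2) * ((d:ℝ) * V^2) * G2 := by
          nlinarith [hdV2, mul_pos (mul_pos hdpos (by positivity : (0:ℝ) < V^2)) (by positivity : (0:ℝ) < G2)]
        have h2 : 2 * K ≤ (2 * ((d:ℝ) * V^2) * G)^2 := by nlinarith [hKle, hstep, hG2sq]
        have := Real.sqrt_le_sqrt h2
        rwa [Real.sqrt_sq (by positivity)] at this
      have hpos2 : (0:ℝ) < 2 * ((d:ℝ) * V^2) * G := by positivity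
      have hs2Kpos : 0 < Real.sqrt (2 * K) := Real.sqrt_pos.mpr (by linarith)
      have hRlow : 1 / (2 * ((d:ℝ) * V^2) * G)
          ≤ Real.sqrt (min (lam i) (lam k) / max (lam i) (lam k)) := by
        have ha : 1 / (2 * ((d:ℝ) * V^2) * G) ≤ 1 / Real.sqrt (2 * K) :=
          one_div_le_one_div_of_le hs2Kpos hs2K
        have hb : 1 / Real.sqrt (2 * K) = Real.sqrt (1 / (2 * K)) := by
          rw [one_div, one_div, ← Real.sqrt_inv]
        have hc : Real.sqrt (1 / (2 * K))
            ≤ Real.sqrt (min (lam i) (lam k) / max (lam i) (lam k)) :=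
          Real.sqrt_le_sqrt h1
        linarith
      have hGR : 1 ≤ (2 * ((d:ℝ) * V^2) * G)
          * Real.sqrt (min (lam i) (lam k) / max (lam i) (lam k)) := by
        have := mul_le_mul_of_nonneg_left hRlow hpos2.le
        rwa [mul_one_div, div_self (ne_of_gt hpos2)] at this
      have hd4 : (1:ℝ) ≤ (d:ℝ)^4 := one_le_pow₀ hd1
      have hCm4 : (1:ℝ) ≤ Cm^4 := one_le_pow₀ hCm
      have h2 : (1:ℝ) ≤ (5/2) * (d:ℝ)^5 * V^2 * Cm^4 := by
        nlinarith [mul_le_mul hd4 hdV2 (by norm_num) (by positivity),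
          mul_le_mul (mul_le_mul hd4 hdV2 (by norm_num) (by positivity)) hCm4 (by norm_num) (by positivity)]
      have hRHS1 : 1 ≤ 5 * (d:ℝ)^6 * V^4 * Cm^4 * G
          * Real.sqrt (min (lam i) (lam k) / max (lam i) (lam k)) := by
        nlinarith [mul_le_mul h2 hGR (by norm_num) (by positivity)]
      calc |em1 i ⬝ᵥ em k| ≤ 1 := hF6 i k
        _ ≤ _ := hRHS1
end
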